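/- arXiv:2011.13502 — 5 statements merged into one kernel-verified Lean document; each statement's English description precedes it below -/
import Mathlib

section
/- (Fictitious space lemma, semi-definite version.) Let V, W be finite-dimensional real inner-product spaces, A : V → V' and à : W → W' symmetric positive semi-definite linear operators with kernels N = N(A) and Ñ = N(Ã), and B̃ : W' → W symmetric positive definite. Let Π : W → V be linear with Π(Ñ) ⊆ N. Suppose there are constants c₀, c₁ > 0 such that (i) |Πw|_A ≤ c₀ |w|_à for all w ∈ W, and (ii) for every v ∈ V there exists w ∈ W with Πw − v ∈ N and |w|_à ≤ c₁ |v|_A. Then B := Π B̃ Π' satisfies κ(BA) ≤ (c₀c₁)² κ(B̃Ã), where κ(BA) denotes the ratio of the maximum to the minimum eigenvalue of the induced operator [B][A] on the quotient V/N. -/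
open scoped RealInnerProductSpace


lemma cs_psd {V : Type*} [NormedAddCommGroup V] [InnerProductSpace ℝ V]
    (Q : V →ₗ[ℝ] V) (hsym : ∀ v w : V, ⟪Q v, w⟫ = ⟪Q w, v⟫)
    (hpos : ∀ v : V, 0 ≤ ⟪Q v, v⟫) (v w : V) :
    ⟪Q v, w⟫ ^ 2 ≤ ⟪Q v, v⟫ * ⟪Q w, w⟫ := by
  have expand : ∀ a b : ℝ, ⟪Q (a • v + b • w), a • v + b • w⟫ =
      a^2 * ⟪Q v, v⟫ + 2*a*b*⟪Q v, w⟫ + b^2 * ⟪Q w, w⟫ := by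
    intro a b
    simp only [map_add, map_smul, inner_add_left, inner_add_right,
      inner_smul_left, inner_smul_right, RCLike.ofReal_real_eq_id, id, starRingEnd_apply,
      star_trivial]
    rw [hsym w v]; ring
  by_cases ha : ⟪Q w, w⟫ = 0
  · by_cases hb : ⟪Q v, w⟫ = 0
    · simp [hb, ha, hpos v, pow_two_nonneg]
    · exfalso
      set b := ⟪Q v, w⟫ with hbdef
      set t : ℝ := -(⟪Q v, v⟫ + 1)/(2*b) with htdef
      have h := hpos ((1:ℝ) • v + t • w)
      rw [expand 1 t, ha] at h
      have ht : t * b = -(⟪Q v, v⟫ + 1)/2 := by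
        rw [htdef]; field_simp
      nlinarith [hpos v]
  · have h := hpos ((⟪Q w, w⟫) • v + (-⟪Q v, w⟫) • w)
    rw [expand] at h
    have ha' : 0 < ⟪Q w, w⟫ := lt_of_le_of_ne (hpos w) (Ne.symm ha)
    nlinarith

lemma ker_of_form {V : Type*} [NormedAddCommGroup V] [InnerProductSpace ℝ V]
    (Q : V →ₗ[ℝ] V) (hsym : ∀ v w : V, ⟪Q v, w⟫ = ⟪Q w, v⟫)
    (hpos : ∀ v : V, 0 ≤ ⟪Q v, v⟫) (v : V) (h : ⟪Q v, v⟫ = 0) : Q v = 0 := by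
  have : ⟪Q v, Q v⟫ = 0 := by
    have h1 := cs_psd Q hsym hpos v (Q v)
    rw [h] at h1
    have h2 := real_inner_self_nonneg (x := Q v)
    nlinarith
  exact inner_self_eq_zero.mp this

lemma mem_range_of_orth_ker {W : Type*} [NormedAddCommGroup W] [InnerProductSpace ℝ W]
    [FiniteDimensional ℝ W] (At : W →ₗ[ℝ] W)
    (hsym : ∀ v w : W, ⟪At v, w⟫ = ⟪At w, v⟫) (g : W)
    (horth : ∀ z ∈ LinearMap.ker At, ⟪z, g⟫ = 0) : ∃ u : W, At u = g := by
  have hor : (LinearMap.range At)ᗮ = LinearMap.ker At := by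
    ext z
    simp only [Submodule.mem_orthogonal, LinearMap.mem_ker, LinearMap.mem_range]
    constructor
    · intro h
      have h2 : ⟪At z, At z⟫ = 0 := by
        rw [hsym]
        exact h (At (At z)) ⟨At z, rfl⟩
      exact inner_self_eq_zero.mp h2
    · rintro hz u ⟨x, rfl⟩
      rw [hsym, hz, inner_zero_left]
  have hrange : LinearMap.range At = (LinearMap.ker At)ᗮ := by
    rw [← hor, Submodule.orthogonal_orthogonal]
  have : g ∈ (LinearMap.ker At)ᗮ := by
    rw [Submodule.mem_orthogonal]
    exact horth
  rw [← hrange] at this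
  exact this
/-- Rayleigh-quotient spectral bounds `m ≤ λ ≤ M` for the operator `[B][A]` induced on the
quotient `V/N(A)`, expressed via the `A`-(semi-)inner product: for every `v`,
`m ⟨Av,v⟩ ≤ ⟨A B A v, v⟩ ≤ M ⟨Av,v⟩`.  (Dual spaces are identified with the underlying
finite-dimensional inner-product space via the Riesz representation.) -/
def SpecBounds {V : Type*} [NormedAddCommGroup V] [InnerProductSpace ℝ V]
    (A B : V →ₗ[ℝ] V) (m M : ℝ) : Prop :=
  ∀ v : V, m * ⟪A v, v⟫ ≤ ⟪A (B (A v)), v⟫ ∧ ⟪A (B (A v)), v⟫ ≤ M * ⟪A v, v⟫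

/-- fictitious space lemma, semi-definite version.  If `A`, `Ã` are symmetric
positive semi-definite, `B̃` is SPD, `Π` maps `N(Ã)` into `N(A)`, is bounded in energy seminorms
with constant `c₀`, and admits stable liftings modulo kernels with constant `c₁`, then
`B = Π B̃ Π'` satisfies `κ(BA) ≤ (c₀ c₁)² κ(B̃ Ã)`:  any spectral bounds `(mt, Mt)` for `B̃ Ã`
yield spectral bounds `(m, M)` for `B A` on the quotient with `M/m ≤ (c₀c₁)² (Mt/mt)`. -/
theorem stmt2 {V W : Type*}
    [NormedAddCommGroup V] [InnerProductSpace ℝ V] [FiniteDimensional ℝ V]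
    [NormedAddCommGroup W] [InnerProductSpace ℝ W] [FiniteDimensional ℝ W]
    (A : V →ₗ[ℝ] V) (At Bt : W →ₗ[ℝ] W)
    (hAsym : ∀ v w : V, ⟪A v, w⟫ = ⟪A w, v⟫) (hApos : ∀ v : V, 0 ≤ ⟪A v, v⟫)
    (hAtsym : ∀ v w : W, ⟪At v, w⟫ = ⟪At w, v⟫) (hAtpos : ∀ v : W, 0 ≤ ⟪At v, v⟫)
    (hBtsym : ∀ v w : W, ⟪Bt v, w⟫ = ⟪Bt w, v⟫) (hBtpos : ∀ v : W, 0 ≤ ⟪Bt v, v⟫)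
    (hBtdef : ∀ v : W, ⟪Bt v, v⟫ = 0 → v = 0)
    (P : W →ₗ[ℝ] V)
    (hker : ∀ w ∈ LinearMap.ker At, P w ∈ LinearMap.ker A)
    (c₀ c₁ : ℝ) (hc₀ : 0 < c₀) (hc₁ : 0 < c₁)
    (hbound : ∀ w : W, Real.sqrt ⟪A (P w), P w⟫ ≤ c₀ * Real.sqrt ⟪At w, w⟫)
    (hlift : ∀ v : V, ∃ w : W, P w - v ∈ LinearMap.ker A ∧
      Real.sqrt ⟪At w, w⟫ ≤ c₁ * Real.sqrt ⟪A v, v⟫) :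
    ∀ mt Mt : ℝ, 0 < mt → SpecBounds At Bt mt Mt →
      ∃ m M : ℝ, 0 < m ∧
        SpecBounds A (P ∘ₗ Bt ∘ₗ LinearMap.adjoint P) m M ∧
        M / m ≤ (c₀ * c₁) ^ 2 * (Mt / mt) := by
  intro mt Mt hmt hspec
  replace hspec : ∀ w : W, mt * ⟪At w, w⟫ ≤ ⟪At (Bt (At w)), w⟫ ∧
      ⟪At (Bt (At w)), w⟫ ≤ Mt * ⟪At w, w⟫ := hspec
  have hAtspec : ∀ w : W, ⟪At (Bt (At w)), w⟫ = ⟪Bt (At w), At w⟫ := by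
    intro w
    rw [hAtsym (Bt (At w)) w, real_inner_comm]
  have hsqb : ∀ w : W, ⟪A (P w), P w⟫ ≤ c₀^2 * ⟪At w, w⟫ := by
    intro w
    have h2 : (Real.sqrt ⟪A (P w), P w⟫)^2 ≤ (c₀ * Real.sqrt ⟪At w, w⟫)^2 :=
      pow_le_pow_left₀ (Real.sqrt_nonneg _) (hbound w) 2
    rw [Real.sq_sqrt (hApos _), mul_pow, Real.sq_sqrt (hAtpos w)] at h2
    exact h2
  by_cases hMt : 0 ≤ Mt
  · -- main case
    refine ⟨mt / c₁^2, c₀^2 * Mt, by positivity, ?_, ?_⟩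
    · intro v
      set g : W := LinearMap.adjoint P (A v) with hg
      have keyeq : ⟪A ((P ∘ₗ Bt ∘ₗ LinearMap.adjoint P) (A v)), v⟫ = ⟪Bt g, g⟫ := by
        show ⟪A (P (Bt g)), v⟫ = ⟪Bt g, g⟫
        rw [hAsym (P (Bt g)) v, ← LinearMap.adjoint_inner_left P (Bt g) (A v), ← hg,
          real_inner_comm]
      constructor
      · -- lower bound
        rw [keyeq]
        obtain ⟨w, hw1, hw2⟩ := hlift v
        rw [LinearMap.mem_ker, map_sub, sub_eq_zero] at hw1
        have e4 : ⟪g, w⟫ = ⟪A v, v⟫ := by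
          rw [hg, LinearMap.adjoint_inner_left, ← hAsym (P w) v, hw1]
        have horth : ∀ z ∈ LinearMap.ker At, ⟪z, g⟫ = 0 := by
          intro z hz
          have hz' : A (P z) = 0 := hker z hz
          rw [real_inner_comm, hg, LinearMap.adjoint_inner_left, ← hAsym (P z) v, hz',
            inner_zero_left]
        obtain ⟨u, hu⟩ := mem_range_of_orth_ker At hAtsym g horth
        have hgu : (0:ℝ) ≤ ⟪g, u⟫ := by rw [← hu]; exact hAtpos u
        have e6 : ⟪At w, u⟫ = ⟪A v, v⟫ := by rw [← hAtsym u w, hu]; exact e4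
        have cs3 := cs_psd At hAtsym hAtpos w u
        rw [e6, hu] at cs3
        have hspecl := (hspec u).1
        rw [hAtspec u, hu] at hspecl
        -- hspecl : mt * ⟪g, u⟫ ≤ ⟪Bt g, g⟫
        have hw2sq : ⟪At w, w⟫ ≤ c₁^2 * ⟪A v, v⟫ := by
          have h2 : (Real.sqrt ⟪At w, w⟫)^2 ≤ (c₁ * Real.sqrt ⟪A v, v⟫)^2 :=
            pow_le_pow_left₀ (Real.sqrt_nonneg _) hw2 2
          rw [Real.sq_sqrt (hAtpos w), mul_pow, Real.sq_sqrt (hApos v)] at h2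
          exact h2
        rcases eq_or_lt_of_le (hApos v) with h0 | h0
        · rw [← h0, mul_zero]; exact hBtpos g
        · have h1 : ⟪A v, v⟫^2 ≤ (c₁^2 * ⟪A v, v⟫) * ⟪g, u⟫ :=
            le_trans cs3 (mul_le_mul_of_nonneg_right hw2sq hgu)
          have h2 : (c₁^2 * ⟪A v, v⟫) * (mt * ⟪g, u⟫) ≤ (c₁^2 * ⟪A v, v⟫) * ⟪Bt g, g⟫ :=
            mul_le_mul_of_nonneg_left hspecl (by positivity)
          have h3 : mt * ⟪A v, v⟫^2 ≤ (c₁^2 * ⟪A v, v⟫) * ⟪Bt g, g⟫ := by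
            nlinarith [mul_le_mul_of_nonneg_left h1 hmt.le]
          rw [div_mul_eq_mul_div, div_le_iff₀ (pow_pos hc₁ 2)]
          nlinarith [h3, h0]
      · -- upper bound
        rw [keyeq]
        have hβ0 : 0 ≤ ⟪At (Bt g), Bt g⟫ := hAtpos (Bt g)
        have e1 : ⟪At (Bt g), Bt g⟫ = ⟪Bt (At (Bt g)), g⟫ := by
          rw [hBtsym (At (Bt g)) g, real_inner_comm (Bt g) (At (Bt g))]
        have cs1 := cs_psd Bt hBtsym hBtpos (At (Bt g)) g
        rw [← e1] at cs1
        have specU := (hspec (Bt g)).2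
        rw [hAtspec (Bt g)] at specU
        have hβα : ⟪At (Bt g), Bt g⟫ ≤ Mt * ⟪Bt g, g⟫ := by
          rcases eq_or_lt_of_le hβ0 with h0 | h0
          · rw [← h0]; exact mul_nonneg hMt (hBtpos g)
          · nlinarith [hBtpos g]
        have e3 : ⟪Bt g, g⟫ = ⟪A v, P (Bt g)⟫ := by
          rw [real_inner_comm, hg, LinearMap.adjoint_inner_left]
        have cs2 := cs_psd A hAsym hApos v (P (Bt g))
        rw [← e3] at cs2
        have hb1 := hsqb (Bt g)
        rcases eq_or_lt_of_le (hBtpos g) with h0 | h0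
        · rw [← h0]
          exact mul_nonneg (mul_nonneg (sq_nonneg c₀) hMt) (hApos v)
        · nlinarith [cs2, h0, mul_le_mul_of_nonneg_left hb1 (hApos v),
            mul_le_mul_of_nonneg_left hβα (mul_nonneg (hApos v) (sq_nonneg c₀))]
    · apply le_of_eq
      field_simp
  · -- degenerate case : Mt < 0 forces At (hence A) to vanish
    push_neg at hMt
    have hAt0 : ∀ w : W, ⟪At w, w⟫ = 0 := by
      intro w
      have h := (hspec w).2
      rw [hAtspec w] at h
      have h1 := hBtpos (At w)
      have h2 := hAtpos w
      nlinarith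
    have hA0 : ∀ v : V, A v = 0 := by
      intro v
      obtain ⟨w, hw1, hw2⟩ := hlift v
      rw [LinearMap.mem_ker, map_sub, sub_eq_zero] at hw1
      have hPw : ⟪A (P w), P w⟫ = 0 := by
        have h := hsqb w
        rw [hAt0 w] at h
        have := hApos (P w)
        linarith [h]
      have h2 := ker_of_form A hAsym hApos (P w) hPw
      rw [← hw1, h2]
    refine ⟨1, (c₀ * c₁)^2 * (Mt / mt), one_pos, ?_, by rw [div_one]⟩
    intro v
    constructor <;> simp [hA0]
end

section
/- (Fictitious space lemma, definite version.) Let V, W be finite-dimensional real inner-product spaces, A : V → V' and à : W → W' symmetric positive definite, B̃ : W' → W symmetric positive definite, and Π : W → V a surjective linear map. Suppose there are constants c₀, c₁ > 0 such that ‖Πw‖_A ≤ c₀ ‖w‖_à for all w ∈ W, and for every v ∈ V some w ∈ W satisfies Πw = v and ‖w‖_à ≤ c₁ ‖v‖_A. Then B := Π B̃ Π' satisfies κ(BA) ≤ (c₀c₁)² κ(B̃Ã). -/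
open scoped RealInnerProductSpace

private lemma cs_aux {V : Type*} [NormedAddCommGroup V] [InnerProductSpace ℝ V]
    (A : V →ₗ[ℝ] V) (hsym : ∀ v w : V, ⟪A v, w⟫ = ⟪A w, v⟫)
    (hpos : ∀ v : V, 0 ≤ ⟪A v, v⟫) (u v : V) :
    ⟪A u, v⟫ ^ 2 ≤ ⟪A u, u⟫ * ⟪A v, v⟫ := by
  have h : ∀ t : ℝ, 0 ≤ ⟪A u, u⟫ * (t * t) + (2 * ⟪A u, v⟫) * t + ⟪A v, v⟫ := by
    intro t
    have h0 := hpos (t • u + v)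
    have h1 : ⟪A (t • u + v), t • u + v⟫
        = ⟪A u, u⟫ * (t * t) + (⟪A u, v⟫ + ⟪A v, u⟫) * t + ⟪A v, v⟫ := by
      simp [map_add, map_smul, inner_add_left, inner_add_right, inner_smul_left,
        inner_smul_right]
      ring
    rw [h1] at h0
    rw [hsym v u] at h0
    linarith
  have hd := discrim_le_zero h
  rw [discrim] at hd
  nlinarith [hd]

/-- fictitious space lemma, definite version.  If `A`, `Ã`, `B̃` are SPD,
`Π : W → V` is surjective, `‖Πw‖_A ≤ c₀‖w‖_Ã`, and every `v` has a lifting `w` with `Πw = v`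
and `‖w‖_Ã ≤ c₁‖v‖_A`, then `B = Π B̃ Π'` satisfies `κ(BA) ≤ (c₀c₁)² κ(B̃Ã)`. -/
theorem stmt3 {V W : Type*}
    [NormedAddCommGroup V] [InnerProductSpace ℝ V] [FiniteDimensional ℝ V]
    [NormedAddCommGroup W] [InnerProductSpace ℝ W] [FiniteDimensional ℝ W]
    (A : V →ₗ[ℝ] V) (At Bt : W →ₗ[ℝ] W)
    (hAsym : ∀ v w : V, ⟪A v, w⟫ = ⟪A w, v⟫) (hApos : ∀ v : V, 0 ≤ ⟪A v, v⟫)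
    (hAdef : ∀ v : V, ⟪A v, v⟫ = 0 → v = 0)
    (hAtsym : ∀ v w : W, ⟪At v, w⟫ = ⟪At w, v⟫) (hAtpos : ∀ v : W, 0 ≤ ⟪At v, v⟫)
    (hAtdef : ∀ v : W, ⟪At v, v⟫ = 0 → v = 0)
    (hBtsym : ∀ v w : W, ⟪Bt v, w⟫ = ⟪Bt w, v⟫) (hBtpos : ∀ v : W, 0 ≤ ⟪Bt v, v⟫)
    (hBtdef : ∀ v : W, ⟪Bt v, v⟫ = 0 → v = 0)
    (P : W →ₗ[ℝ] V) (hsurj : Function.Surjective P)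
    (c₀ c₁ : ℝ) (hc₀ : 0 < c₀) (hc₁ : 0 < c₁)
    (hbound : ∀ w : W, Real.sqrt ⟪A (P w), P w⟫ ≤ c₀ * Real.sqrt ⟪At w, w⟫)
    (hlift : ∀ v : V, ∃ w : W, P w = v ∧
      Real.sqrt ⟪At w, w⟫ ≤ c₁ * Real.sqrt ⟪A v, v⟫) :
    ∀ mt Mt : ℝ, 0 < mt → SpecBounds At Bt mt Mt →
      ∃ m M : ℝ, 0 < m ∧
        SpecBounds A (P ∘ₗ Bt ∘ₗ LinearMap.adjoint P) m M ∧
        M / m ≤ (c₀ * c₁) ^ 2 * (Mt / mt) := by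
  intro mt Mt hmt hspec
  -- At is surjective
  have hAtinj : Function.Injective At := by
    rw [← LinearMap.ker_eq_bot, LinearMap.ker_eq_bot']
    intro x hx
    exact hAtdef x (by rw [hx]; simp)
  have hAtsurj : Function.Surjective At :=
    (LinearMap.injective_iff_surjective).mp hAtinj
  refine ⟨mt / c₁ ^ 2, Mt * c₀ ^ 2, by positivity, ?_, ?_⟩
  · intro v
    set y : W := LinearMap.adjoint P (A v) with hy
    have hkey : ⟪A ((P ∘ₗ Bt ∘ₗ LinearMap.adjoint P) (A v)), v⟫ = ⟪Bt y, y⟫ := by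
      rw [hAsym, real_inner_comm]
      simp only [LinearMap.comp_apply]
      rw [← LinearMap.adjoint_inner_right P, ← hy]
    rw [hkey]
    rcases eq_or_lt_of_le (hApos v) with ha0 | ha
    · -- ⟪A v, v⟫ = 0 so v = 0
      have hv0 : v = 0 := hAdef v ha0.symm
      subst hv0
      simp [hy]
    · -- main case
      obtain ⟨w₀, hw₀⟩ := hAtsurj y
      set a : ℝ := ⟪A v, v⟫ with hadef
      set s : ℝ := ⟪At w₀, w₀⟫ with hsdef
      have hs0 : 0 ≤ s := hAtpos w₀
      have hBtyy : ⟪Bt y, y⟫ = ⟪At (Bt (At w₀)), w₀⟫ := by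
        rw [hAtsym, real_inner_comm, hw₀]
      obtain ⟨hlo, hhi⟩ := hspec w₀
      -- s = ⟪A v, P w₀⟫
      have hsval : s = ⟪A v, P w₀⟫ := by
        rw [hsdef, hw₀, hy, LinearMap.adjoint_inner_left]
      -- hbound squared
      have hb2 : ∀ w : W, ⟪A (P w), P w⟫ ≤ c₀ ^ 2 * ⟪At w, w⟫ := by
        intro w
        have h1 := hbound w
        have h2 : Real.sqrt ⟪A (P w), P w⟫ ^ 2 ≤ (c₀ * Real.sqrt ⟪At w, w⟫) ^ 2 := by
          have := Real.sqrt_nonneg ⟪A (P w), P w⟫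
          nlinarith
        rw [Real.sq_sqrt (hApos (P w)), mul_pow, Real.sq_sqrt (hAtpos w)] at h2
        exact h2
      -- s ≤ c₀^2 * a
      have hsa : s ≤ c₀ ^ 2 * a := by
        have hcs := cs_aux A hAsym hApos v (P w₀)
        have h1 : s ^ 2 ≤ a * (c₀ ^ 2 * s) := by
          calc s ^ 2 = ⟪A v, P w₀⟫ ^ 2 := by rw [hsval]
            _ ≤ a * ⟪A (P w₀), P w₀⟫ := hcs
            _ ≤ a * (c₀ ^ 2 * s) := by
                exact mul_le_mul_of_nonneg_left (hb2 w₀) (le_of_lt ha)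
        rcases eq_or_lt_of_le hs0 with h | h
        · nlinarith
        · nlinarith
      -- a ≤ c₁^2 * s
      have has : a ≤ c₁ ^ 2 * s := by
        obtain ⟨w, hPw, hw⟩ := hlift v
        have hw2 : ⟪At w, w⟫ ≤ c₁ ^ 2 * a := by
          have h2 : Real.sqrt ⟪At w, w⟫ ^ 2 ≤ (c₁ * Real.sqrt ⟪A v, v⟫) ^ 2 := by
            have := Real.sqrt_nonneg ⟪At w, w⟫
            nlinarith
          rw [Real.sq_sqrt (hAtpos w), mul_pow, Real.sq_sqrt (hApos v)] at h2
          exact h2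
        have haval : a = ⟪At w₀, w⟫ := by
          rw [hw₀, hy, LinearMap.adjoint_inner_left, hPw]
        have hcs := cs_aux At hAtsym hAtpos w₀ w
        have h1 : a ^ 2 ≤ s * (c₁ ^ 2 * a) := by
          calc a ^ 2 = ⟪At w₀, w⟫ ^ 2 := by rw [haval]
            _ ≤ s * ⟪At w, w⟫ := hcs
            _ ≤ s * (c₁ ^ 2 * a) := mul_le_mul_of_nonneg_left hw2 hs0
        nlinarith
      have hspos : 0 < s := by nlinarith
      have hMt : 0 < Mt := by
        have h1 : 0 < mt * s := mul_pos hmt hspos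
        have h2 : mt * s ≤ Mt * s := le_trans hlo hhi
        nlinarith
      constructor
      · rw [hBtyy]
        calc mt / c₁ ^ 2 * a ≤ mt / c₁ ^ 2 * (c₁ ^ 2 * s) := by
              exact mul_le_mul_of_nonneg_left has (by positivity)
          _ = mt * s := by field_simp
          _ ≤ _ := hlo
      · rw [hBtyy]
        calc ⟪At (Bt (At w₀)), w₀⟫ ≤ Mt * s := hhi
          _ ≤ Mt * (c₀ ^ 2 * a) := mul_le_mul_of_nonneg_left hsa (le_of_lt hMt)
          _ = Mt * c₀ ^ 2 * a := by ring
  · have : Mt * c₀ ^ 2 / (mt / c₁ ^ 2) = (c₀ * c₁) ^ 2 * (Mt / mt) := by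
      field_simp
    rw [this]
end

section
/- Let V be a finite-dimensional real inner-product space, A : V → V' symmetric positive semi-definite with kernel N, and B : V' → V symmetric positive definite. In the preconditioned conjugate gradient algorithm applied to Au = f with compatible data f (i.e., f vanishes on N), every residual r_k lies in the polar set of N, every search direction p_k satisfies (p_k, z)_{B⁻¹} = 0 for all z ∈ N, and consequently |p_k|_A ≠ 0 whenever r_k ≠ 0; thus the algorithm is well defined for the semi-definite operator A. -/
open scoped RealInnerProductSpace

/-- In the preconditioned conjugate gradient algorithm for a symmetric
positive semi-definite operator `A` with SPD preconditioner `B` (dual spaces identified with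
`V` via Riesz; `Binv` is the inverse of `B`) and compatible data `f` (vanishing on `N = ker A`),
every residual `r_k` lies in the polar set of `N`, every search direction satisfies
`(p_k, z)_{B⁻¹} = 0` for `z ∈ N`, and consequently `|p_k|_A ≠ 0` whenever `r_k ≠ 0`; thus the
algorithm is well defined for the semi-definite operator `A`. -/
theorem stmt4 {V : Type*} [NormedAddCommGroup V] [InnerProductSpace ℝ V]
    [FiniteDimensional ℝ V]
    (A B Binv : V →ₗ[ℝ] V)
    (hAsym : ∀ v w : V, ⟪A v, w⟫ = ⟪A w, v⟫) (hApos : ∀ v : V, 0 ≤ ⟪A v, v⟫)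
    (hBsym : ∀ v w : V, ⟪B v, w⟫ = ⟪B w, v⟫) (hBpos : ∀ v : V, 0 ≤ ⟪B v, v⟫)
    (hBdef : ∀ v : V, ⟪B v, v⟫ = 0 → v = 0)
    (hBinv : ∀ v : V, Binv (B v) = v)
    (f : V) (hcompat : ∀ n ∈ LinearMap.ker A, ⟪f, n⟫ = 0)
    (u r z p : ℕ → V) (α β : ℕ → ℝ)
    (hr0 : r 0 = f - A (u 0))
    (hz : ∀ k, z k = B (r k))
    (hp0 : p 0 = z 0)
    (hα : ∀ k, α k = ⟪r k, z k⟫ / ⟪A (p k), p k⟫)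
    (hu : ∀ k, u (k + 1) = u k + α k • p k)
    (hr : ∀ k, r (k + 1) = r k - α k • A (p k))
    (hβ : ∀ k, β k = ⟪r (k + 1), z (k + 1)⟫ / ⟪r k, z k⟫)
    (hp : ∀ k, p (k + 1) = z (k + 1) + β k • p k) :
    ∀ k : ℕ,
      (∀ n ∈ LinearMap.ker A, ⟪r k, n⟫ = 0) ∧
      (∀ n ∈ LinearMap.ker A, ⟪Binv (p k), n⟫ = 0) ∧
      (r k ≠ 0 → ⟪A (p k), p k⟫ ≠ 0) := by
  -- A is PSD symmetric: ⟪A v, v⟫ = 0 implies A v = 0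
  have hAzero : ∀ v : V, ⟪A v, v⟫ = 0 → A v = 0 := by
    intro v hv
    have key : ∀ w : V, ⟪A v, w⟫ = 0 := by
      intro w
      set c := ⟪A v, w⟫ with hc
      set d := ⟪A w, w⟫ with hd
      have hkey : ∀ t : ℝ, 0 ≤ 2 * t * c + t ^ 2 * d := by
        intro t
        have h := hApos (v + t • w)
        have hexp : ⟪A (v + t • w), v + t • w⟫
            = ⟪A v, v⟫ + t * ⟪A v, w⟫ + t * ⟪A w, v⟫ + t ^ 2 * ⟪A w, w⟫ := by
          simp [map_add, map_smul, inner_add_left, inner_add_right,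
            real_inner_smul_left, real_inner_smul_right]
          ring
        rw [hexp, hv, hAsym w v] at h
        rw [← hc, ← hd] at h
        linarith
      have hd0 : 0 ≤ d := hApos w
      have hc2 : c ^ 2 ≤ 0 := by
        rcases eq_or_lt_of_le hd0 with hdz | hdp
        · have h1 := hkey (-c)
          nlinarith [sq_nonneg c]
        · have h1 := hkey (-(c / d))
          have e1 : 2 * (-(c / d)) * c + (-(c / d)) ^ 2 * d = -(c ^ 2 / d) := by
            field_simp
            ring
          rw [e1] at h1
          by_contra hcon
          push_neg at hcon
          have : 0 < c ^ 2 / d := div_pos hcon hdp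
          linarith
      have : c ^ 2 = 0 := le_antisymm hc2 (sq_nonneg c)
      exact sq_eq_zero_iff.mp this
    have := key (A v)
    exact inner_self_eq_zero.mp this
  -- B is bijective
  have hBinj : Function.Injective B := by
    intro a b hab
    have : B (a - b) = 0 := by rw [map_sub, hab, sub_self]
    have h0 : ⟪B (a - b), a - b⟫ = 0 := by rw [this, inner_zero_left]
    have := hBdef _ h0
    exact sub_eq_zero.mp this
  have hBsurj : Function.Surjective B :=
    (LinearMap.injective_iff_surjective).mp hBinj
  have hBBinv : ∀ v : V, B (Binv v) = v := by
    intro v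
    obtain ⟨w, rfl⟩ := hBsurj v
    rw [hBinv]
  -- from A q = 0 and B⁻¹-orthogonality to the kernel, q = 0
  have hpol : ∀ q : V, A q = 0 → (∀ n ∈ LinearMap.ker A, ⟪Binv q, n⟫ = 0) → q = 0 := by
    intro q hq h2
    have hqm : q ∈ LinearMap.ker A := LinearMap.mem_ker.mpr hq
    have h3 := h2 q hqm
    have h4 : ⟪B (Binv q), Binv q⟫ = 0 := by
      rw [hBBinv, real_inner_comm]
      exact h3
    have h5 := hBdef _ h4
    rw [← hBBinv q, h5, map_zero]
  -- strengthened induction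
  suffices H : ∀ k : ℕ,
      (∀ n ∈ LinearMap.ker A, ⟪r k, n⟫ = 0) ∧
      (∀ n ∈ LinearMap.ker A, ⟪Binv (p k), n⟫ = 0) ∧
      (r k ≠ 0 → ⟪A (p k), p k⟫ ≠ 0) ∧
      ⟪r k, p k⟫ = ⟪r k, B (r k)⟫ by
    intro k
    exact ⟨(H k).1, (H k).2.1, (H k).2.2.1⟩
  intro k
  induction k with
  | zero =>
    have C1 : ∀ n ∈ LinearMap.ker A, ⟪r 0, n⟫ = 0 := by
      intro n hn
      have hAn : A n = 0 := LinearMap.mem_ker.mp hn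
      rw [hr0, inner_sub_left, hcompat n hn, hAsym, hAn, inner_zero_left, sub_zero]
    have C2 : ∀ n ∈ LinearMap.ker A, ⟪Binv (p 0), n⟫ = 0 := by
      intro n hn
      rw [hp0, hz, hBinv]
      exact C1 n hn
    refine ⟨C1, C2, ?_, by rw [hp0, hz]⟩
    intro hr0ne hcon
    have hA0 : A (p 0) = 0 := hAzero _ hcon
    have hp00 : p 0 = 0 := hpol _ hA0 C2
    apply hr0ne
    apply hBinj
    rw [map_zero, ← hz, ← hp0, hp00]
  | succ k ih =>
    obtain ⟨ih1, ih2, ih3, ih4⟩ := ih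
    have hApn : ∀ n ∈ LinearMap.ker A, ⟪A (p k), n⟫ = 0 := by
      intro n hn
      rw [hAsym, LinearMap.mem_ker.mp hn, inner_zero_left]
    have C1 : ∀ n ∈ LinearMap.ker A, ⟪r (k + 1), n⟫ = 0 := by
      intro n hn
      rw [hr k, inner_sub_left, ih1 n hn, real_inner_smul_left, hApn n hn,
        mul_zero, sub_zero]
    have C2 : ∀ n ∈ LinearMap.ker A, ⟪Binv (p (k + 1)), n⟫ = 0 := by
      intro n hn
      rw [hp k, map_add, map_smul, inner_add_left, real_inner_smul_left,
        hz, hBinv, C1 n hn, ih2 n hn, mul_zero, add_zero]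
    have D : ⟪r (k + 1), p (k + 1)⟫ = ⟪r (k + 1), B (r (k + 1))⟫ := by
      by_cases hrk : r k = 0
      · have hzk : ⟪r k, z k⟫ = 0 := by rw [hrk, inner_zero_left]
        have hαk : α k = 0 := by rw [hα, hzk, zero_div]
        have hrk1 : r (k + 1) = 0 := by rw [hr k, hαk, zero_smul, sub_zero, hrk]
        rw [hrk1]
        simp
      · have hc := ih3 hrk
        have horth : ⟪r (k + 1), p k⟫ = 0 := by
          rw [hr k, inner_sub_left, real_inner_smul_left, hα, hz,
            div_mul_cancel₀ _ hc, ← hz, hz, ih4, sub_self]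
        rw [hp k, inner_add_right, real_inner_smul_right, horth, mul_zero,
          add_zero, hz]
    refine ⟨C1, C2, ?_, D⟩
    intro hrne hcon
    have hA0 : A (p (k + 1)) = 0 := hAzero _ hcon
    have hp0' : p (k + 1) = 0 := hpol _ hA0 C2
    apply hrne
    apply hBdef
    rw [real_inner_comm, ← D, hp0', inner_zero_right]
end

section
/- (Jacobi–Gauss–Seidel symmetrization equivalence.) Let à be a symmetric positive definite n×n real matrix with diagonal D and strictly lower-triangular part L, so à = D + L + Lᵀ. Let S = (D+L)⁻¹ be the forward Gauss–Seidel operator and S̄ = Sᵀ + S − Sᵀ Ã S its symmetrization. Then S̄ = (D+L)⁻ᵀ D (D+L)⁻¹, S̄ is symmetric positive definite, and if the number of nonzero off-diagonal entries in each row of à is at most N₀ then vᵀ S̄⁻¹ v is equivalent to vᵀ D v uniformly: c(N₀)⁻¹ vᵀDv ≤ vᵀS̄⁻¹v ≤ c(N₀) vᵀDv for all v ∈ ℝⁿ, with c(N₀) depending only on N₀ (via the bound on the spectral norm of D^{-1/2}(D+L)D^{-1/2}). -/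
open Matrix

section
variable {n : ℕ} {At : Matrix (Fin n) (Fin n) ℝ} (hPD : At.PosDef)

lemma aux_diag_pos (h : At.PosDef) (i : Fin n) : 0 < At i i := by
  have := h.dotProduct_mulVec_pos (x := Pi.single i 1) (by simp [Function.ne_iff])
  simpa using this

lemma aux_sym (h : At.PosDef) (i j : Fin n) : At j i = At i j := by
  have := (congrFun (congrFun h.isHermitian.eq i) j)
  simpa using this


lemma aux_cs (h : At.PosDef) (i j : Fin n) : (At i j)^2 ≤ At i i * At j j := by
  rcases eq_or_ne i j with rfl | hij
  · nlinarith [aux_diag_pos h i]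
  have hii := aux_diag_pos h i
  set t : ℝ := -(At i j)/(At i i) with ht
  set x : Fin n → ℝ := t • (Pi.single i 1 : Fin n → ℝ) + (Pi.single j 1 : Fin n → ℝ)
    with hxdef
  have := h.posSemidef.dotProduct_mulVec_nonneg x
  have hx : x ⬝ᵥ (At *ᵥ x) = t * (t * At i i + At i j) + (t * At j i + At j j) := by
    rw [hxdef]
    simp [mulVec_add, mulVec_smul, dotProduct_add, add_dotProduct, smul_dotProduct,
      dotProduct_smul, mulVec_single]
    ring
  rw [star_trivial, hx, aux_sym h i j] at this
  rw [ht] at this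
  field_simp at this
  have h3 := this
  nlinarith [h3]

-- the lower triangular matrix B = D + L
noncomputable def Bmat (At : Matrix (Fin n) (Fin n) ℝ) : Matrix (Fin n) (Fin n) ℝ :=
  Matrix.diagonal (fun i => At i i) +
    Matrix.of (fun (i j : Fin n) => if (j : ℕ) < (i : ℕ) then At i j else 0)

lemma Bmat_apply (i j : Fin n) :
    Bmat At i j = if (j : ℕ) ≤ (i : ℕ) then At i j else 0 := by
  simp only [Bmat, Matrix.add_apply, Matrix.of_apply]
  rcases lt_trichotomy (j : ℕ) (i : ℕ) with h | h | h
  · rw [Matrix.diagonal_apply_ne _ (ne_of_gt (show j < i from h)), if_pos h,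
      if_pos (le_of_lt h), zero_add]
  · have : j = i := Fin.ext h
    subst this
    simp
  · rw [Matrix.diagonal_apply_ne _ (ne_of_lt (show i < j from h)), if_neg (by omega),
      if_neg (by omega), add_zero]

lemma Bmat_tri : (Bmat At).BlockTriangular OrderDual.toDual := by
  intro i j hij
  have : (i : ℕ) < j := hij
  rw [Bmat_apply]
  simp [Fin.lt_def, not_le.mpr this]

lemma Bmat_det : (Bmat At).det = ∏ i, At i i := by
  rw [Matrix.det_of_lowerTriangular _ (Bmat_tri)]
  congr 1; ext i; rw [Bmat_apply]; simp

lemma Bmat_det_ne (h : At.PosDef) : (Bmat At).det ≠ 0 := by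
  rw [Bmat_det]
  exact ne_of_gt (Finset.prod_pos fun i _ => aux_diag_pos h i)

lemma At_eq (h : At.PosDef) :
    At = Bmat At + (Bmat At)ᵀ - Matrix.diagonal (fun i => At i i) := by
  ext i j
  simp only [Matrix.sub_apply, Matrix.add_apply, Matrix.transpose_apply, Bmat_apply]
  rcases lt_trichotomy (j : ℕ) (i : ℕ) with h' | h' | h'
  · rw [Matrix.diagonal_apply_ne _ (by simp [Fin.ext_iff]; omega : i ≠ j)]
    rw [if_pos (le_of_lt h'), if_neg (by omega)]
    ring
  · have : j = i := Fin.ext h'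
    subst this
    simp
  · rw [Matrix.diagonal_apply_ne _ (by simp [Fin.ext_iff]; omega : i ≠ j)]
    rw [if_neg (by omega), if_pos (le_of_lt h'), aux_sym h i j]
    ring

noncomputable def Dm (At : Matrix (Fin n) (Fin n) ℝ) : Matrix (Fin n) (Fin n) ℝ :=
  Matrix.diagonal (fun i => At i i)

lemma Dm_det_ne (h : At.PosDef) : (Dm At).det ≠ 0 := by
  rw [Dm, Matrix.det_diagonal]
  exact ne_of_gt (Finset.prod_pos fun i _ => aux_diag_pos h i)

lemma Sb_eq (h : At.PosDef) :
    ((Bmat At)⁻¹)ᵀ + (Bmat At)⁻¹ - ((Bmat At)⁻¹)ᵀ * At * (Bmat At)⁻¹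
      = ((Bmat At)⁻¹)ᵀ * Dm At * (Bmat At)⁻¹ := by
  set B := Bmat At
  have hdet : IsUnit B.det := isUnit_iff_ne_zero.mpr (Bmat_det_ne h)
  have h1 : B * B⁻¹ = 1 := Matrix.mul_nonsing_inv B hdet
  have h2 : B⁻¹ * B = 1 := Matrix.nonsing_inv_mul B hdet
  have hAt : At = B + Bᵀ - Dm At := At_eq h
  conv_lhs => rw [hAt]
  have e1 : (B⁻¹)ᵀ * (B + Bᵀ - Dm At) * B⁻¹
      = (B⁻¹)ᵀ * B * B⁻¹ + (B⁻¹)ᵀ * Bᵀ * B⁻¹ - (B⁻¹)ᵀ * Dm At * B⁻¹ := by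
    simp only [Matrix.mul_sub, Matrix.mul_add, Matrix.sub_mul, Matrix.add_mul]
  have e2 : (B⁻¹)ᵀ * B * B⁻¹ = (B⁻¹)ᵀ := by
    rw [mul_assoc, h1, mul_one]
  have e3 : (B⁻¹)ᵀ * Bᵀ * B⁻¹ = B⁻¹ := by
    rw [← Matrix.transpose_mul, h1, Matrix.transpose_one, one_mul]
  rw [e1, e2, e3]
  abel

lemma Dm_posDef (h : At.PosDef) : (Dm At).PosDef :=
  Matrix.posDef_diagonal_iff.mpr fun i => aux_diag_pos h i

lemma Sb_posDef (h : At.PosDef) : (((Bmat At)⁻¹)ᵀ * Dm At * (Bmat At)⁻¹).PosDef := by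
  set B := Bmat At
  have hdet : IsUnit B.det := isUnit_iff_ne_zero.mpr (Bmat_det_ne h)
  have h1 : B * B⁻¹ = 1 := Matrix.mul_nonsing_inv B hdet
  refine Matrix.PosDef.of_dotProduct_mulVec_pos ?_ ?_
  · unfold Matrix.IsHermitian
    rw [Matrix.conjTranspose_eq_transpose_of_trivial]
    rw [Matrix.transpose_mul, Matrix.transpose_mul, Matrix.transpose_transpose]
    have : (Dm At)ᵀ = Dm At := Matrix.diagonal_transpose _
    rw [this, mul_assoc]
  · intro x hx
    have hy : B⁻¹ *ᵥ x ≠ 0 := by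
      intro hz
      apply hx
      have : B *ᵥ (B⁻¹ *ᵥ x) = x := by rw [Matrix.mulVec_mulVec, h1, Matrix.one_mulVec]
      rw [hz, Matrix.mulVec_zero] at this
      exact this.symm
    have := (Dm_posDef h).dotProduct_mulVec_pos hy
    rw [star_trivial] at this ⊢
    calc 0 < (B⁻¹ *ᵥ x) ⬝ᵥ (Dm At *ᵥ (B⁻¹ *ᵥ x)) := this
    _ = x ⬝ᵥ (((B⁻¹)ᵀ * Dm At * B⁻¹) *ᵥ x) := by
        rw [← Matrix.mulVec_mulVec, ← Matrix.mulVec_mulVec, Matrix.dotProduct_mulVec x,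
          Matrix.vecMul_transpose]

lemma Sb_inv (h : At.PosDef) :
    (((Bmat At)⁻¹)ᵀ * Dm At * (Bmat At)⁻¹)⁻¹ = Bmat At * (Dm At)⁻¹ * (Bmat At)ᵀ := by
  set B := Bmat At
  have hdet : IsUnit B.det := isUnit_iff_ne_zero.mpr (Bmat_det_ne h)
  have h1 : B * B⁻¹ = 1 := Matrix.mul_nonsing_inv B hdet
  have h2 : B⁻¹ * B = 1 := Matrix.nonsing_inv_mul B hdet
  have hD1 : Dm At * (Dm At)⁻¹ = 1 :=
    Matrix.mul_nonsing_inv _ (isUnit_iff_ne_zero.mpr (Dm_det_ne h))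
  apply Matrix.inv_eq_right_inv
  calc ((B⁻¹)ᵀ * Dm At * B⁻¹) * (B * (Dm At)⁻¹ * Bᵀ)
      = (B⁻¹)ᵀ * (Dm At * ((B⁻¹ * B) * ((Dm At)⁻¹ * Bᵀ))) := by
        simp only [mul_assoc]
    _ = 1 := by rw [h2, one_mul, ← mul_assoc (Dm At), hD1, one_mul, ← Matrix.transpose_mul,
        h1, Matrix.transpose_one]

lemma Dm_inv (h : At.PosDef) : (Dm At)⁻¹ = Matrix.diagonal (fun i => (At i i)⁻¹) := by
  apply Matrix.inv_eq_right_inv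
  rw [Dm, Matrix.diagonal_mul_diagonal]
  rw [show (fun i => At i i * (At i i)⁻¹) = fun _ => (1:ℝ) from
    funext fun i => mul_inv_cancel₀ (ne_of_gt (aux_diag_pos h i))]
  exact Matrix.diagonal_one

lemma qD (v : Fin n → ℝ) :
    v ⬝ᵥ (Dm At *ᵥ v) = ∑ i, At i i * v i ^ 2 := by
  simp only [Dm, dotProduct, Matrix.mulVec_diagonal]
  exact Finset.sum_congr rfl fun i _ => by ring

lemma qSbinv (h : At.PosDef) (v : Fin n → ℝ) :
    v ⬝ᵥ ((Bmat At * (Dm At)⁻¹ * (Bmat At)ᵀ) *ᵥ v)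
      = ∑ k, (At k k)⁻¹ * (∑ i, Bmat At i k * v i)^2 := by
  set u := (Bmat At)ᵀ *ᵥ v with hu
  have h1 : (Bmat At * (Dm At)⁻¹ * (Bmat At)ᵀ) *ᵥ v = Bmat At *ᵥ ((Dm At)⁻¹ *ᵥ u) := by
    rw [← Matrix.mulVec_mulVec, ← Matrix.mulVec_mulVec]
  have h2 : ∀ k, u k = ∑ i, Bmat At i k * v i := by
    intro k
    simp [hu, Matrix.mulVec, dotProduct, Matrix.transpose_apply]
  rw [h1, Matrix.dotProduct_mulVec, ← Matrix.mulVec_transpose, ← hu, Dm_inv h]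
  simp only [dotProduct, Matrix.mulVec_diagonal]
  exact Finset.sum_congr rfl fun k _ => by rw [h2 k]; ring

lemma qvu (hPD : At.PosDef) (v : Fin n → ℝ) :
    ∑ i, At i i * v i ^ 2 ≤ 2 * ∑ k, v k * ((Bmat At)ᵀ *ᵥ v) k := by
  have hps := hPD.posSemidef.dotProduct_mulVec_nonneg v
  rw [star_trivial] at hps
  have hAt : At = Bmat At + (Bmat At)ᵀ - Dm At := At_eq hPD
  have e : v ⬝ᵥ (At *ᵥ v)
      = v ⬝ᵥ (Bmat At *ᵥ v) + v ⬝ᵥ ((Bmat At)ᵀ *ᵥ v) - v ⬝ᵥ (Dm At *ᵥ v) := by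
    conv_lhs => rw [hAt]
    rw [Matrix.sub_mulVec, Matrix.add_mulVec, dotProduct_sub, dotProduct_add]
  have e2 : v ⬝ᵥ (Bmat At *ᵥ v) = v ⬝ᵥ ((Bmat At)ᵀ *ᵥ v) := by
    rw [Matrix.mulVec_transpose, Matrix.dotProduct_mulVec, dotProduct_comm]
  have e3 : v ⬝ᵥ ((Bmat At)ᵀ *ᵥ v) = ∑ k, v k * ((Bmat At)ᵀ *ᵥ v) k := rfl
  rw [e, e2, e3, qD] at hps
  linarith

lemma lower_bd (hPD : At.PosDef) (N₀ : ℕ) (v : Fin n → ℝ) :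
    (4*((N₀:ℝ)+1)^2)⁻¹ * ∑ i, At i i * v i ^ 2
      ≤ ∑ k, (At k k)⁻¹ * (∑ i, Bmat At i k * v i)^2 := by
  have hd : ∀ i, 0 < At i i := fun i => aux_diag_pos hPD i
  set u : Fin n → ℝ := fun k => ∑ i, Bmat At i k * v i with hu
  set P := ∑ i, At i i * v i ^ 2 with hP
  set Q := ∑ k, (At k k)⁻¹ * (u k)^2 with hQ
  have hP0 : 0 ≤ P := Finset.sum_nonneg fun i _ => mul_nonneg (hd i).le (sq_nonneg _)
  have hQ0 : 0 ≤ Q := Finset.sum_nonneg fun k _ =>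
    mul_nonneg (inv_nonneg.mpr (hd k).le) (sq_nonneg _)
  have hu' : ∀ k, ((Bmat At)ᵀ *ᵥ v) k = u k := fun k => by
    simp [Matrix.mulVec, dotProduct, Matrix.transpose_apply, hu]
  have hPu : P ≤ 2 * ∑ k, v k * u k := by
    have h := qvu hPD v
    have e : ∑ k, v k * ((Bmat At)ᵀ *ᵥ v) k = ∑ k, v k * u k :=
      Finset.sum_congr rfl fun k _ => by rw [hu' k]
    rw [e] at h
    exact h
  have hCS : (∑ k, v k * u k)^2 ≤ P * Q := by
    have h := Finset.sum_mul_sq_le_sq_mul_sq Finset.univ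
      (fun k => Real.sqrt (At k k) * v k) (fun k => (Real.sqrt (At k k))⁻¹ * u k)
    have e1 : ∀ k : Fin n,
        (Real.sqrt (At k k) * v k) * ((Real.sqrt (At k k))⁻¹ * u k) = v k * u k := by
      intro k
      have hs : Real.sqrt (At k k) ≠ 0 := ne_of_gt (Real.sqrt_pos.mpr (hd k))
      calc (Real.sqrt (At k k) * v k) * ((Real.sqrt (At k k))⁻¹ * u k)
          = (Real.sqrt (At k k) * (Real.sqrt (At k k))⁻¹) * (v k * u k) := by ring
        _ = v k * u k := by rw [mul_inv_cancel₀ hs, one_mul]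
    have e2 : ∀ k : Fin n, (Real.sqrt (At k k) * v k)^2 = At k k * v k ^ 2 := by
      intro k
      rw [mul_pow, Real.sq_sqrt (hd k).le]
    have e3 : ∀ k : Fin n, ((Real.sqrt (At k k))⁻¹ * u k)^2 = (At k k)⁻¹ * u k ^ 2 := by
      intro k
      rw [mul_pow, inv_pow, Real.sq_sqrt (hd k).le]
    calc (∑ k, v k * u k)^2
        = (∑ k, (Real.sqrt (At k k) * v k) * ((Real.sqrt (At k k))⁻¹ * u k))^2 := by
          rw [Finset.sum_congr rfl fun k _ => (e1 k)]
      _ ≤ (∑ k, (Real.sqrt (At k k) * v k)^2) * ∑ k, ((Real.sqrt (At k k))⁻¹ * u k)^2 := h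
      _ = P * Q := by
          rw [Finset.sum_congr rfl fun k _ => (e2 k), Finset.sum_congr rfl fun k _ => (e3 k)]
  rcases eq_or_lt_of_le hP0 with h0 | hPpos
  · rw [← h0, mul_zero]
    exact hQ0
  · have hs : P/2 ≤ ∑ k, v k * u k := by linarith
    have hs2 : (P/2)^2 ≤ (∑ k, v k * u k)^2 := by
      apply pow_le_pow_left₀ (by linarith) hs 2
    have hPQ : P/4 ≤ Q := by nlinarith
    have hcle : (4*((N₀:ℝ)+1)^2)⁻¹ ≤ (4:ℝ)⁻¹ := by
      apply inv_anti₀ (by norm_num)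
      nlinarith [Nat.cast_nonneg (α := ℝ) N₀]
    calc (4*((N₀:ℝ)+1)^2)⁻¹ * P ≤ (4:ℝ)⁻¹ * P :=
        mul_le_mul_of_nonneg_right hcle hP0
      _ ≤ Q := by linarith

lemma upper_bd (hPD : At.PosDef) (N₀ : ℕ)
    (hsp : ∀ i : Fin n, {j : Fin n | j ≠ i ∧ At i j ≠ 0}.ncard ≤ N₀) (v : Fin n → ℝ) :
    ∑ k, (At k k)⁻¹ * (∑ i, Bmat At i k * v i)^2
      ≤ 4*((N₀:ℝ)+1)^2 * ∑ i, At i i * v i ^ 2 := by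
  classical
  have hd : ∀ i, 0 < At i i := fun i => aux_diag_pos hPD i
  have hN0 : (0:ℝ) ≤ (N₀:ℝ)+1 := by positivity
  -- row sparsity as Finset cards
  have hrow : ∀ i, (Finset.univ.filter fun j => At i j ≠ 0).card ≤ N₀ + 1 := by
    intro i
    have h1 := hsp i
    have h2 : {j : Fin n | j ≠ i ∧ At i j ≠ 0}.ncard
        = (Finset.univ.filter fun j => j ≠ i ∧ At i j ≠ 0).card := by
      rw [Set.ncard_eq_toFinset_card']
      congr 1
      ext j
      simp
    have hsub : (Finset.univ.filter fun j => At i j ≠ 0)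
        ⊆ insert i (Finset.univ.filter fun j => j ≠ i ∧ At i j ≠ 0) := by
      intro j hj
      simp only [Finset.mem_filter, Finset.mem_univ, true_and] at hj
      by_cases hji : j = i
      · simp [hji]
      · simp [Finset.mem_insert, hji, hj]
    have h3 := Finset.card_le_card hsub
    have h4 := Finset.card_insert_le i (Finset.univ.filter fun j => j ≠ i ∧ At i j ≠ 0)
    omega
  have hcolB : ∀ k, (Finset.univ.filter fun i => Bmat At i k ≠ 0).card ≤ N₀ + 1 := by
    intro k
    refine le_trans (Finset.card_le_card ?_) (hrow k)
    intro i hi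
    simp only [Finset.mem_filter, Finset.mem_univ, true_and] at hi ⊢
    rw [Bmat_apply] at hi
    intro h0
    apply hi
    rw [← aux_sym hPD k i] at h0
    simp [h0]
  have hrowB : ∀ i, (Finset.univ.filter fun k => Bmat At i k ≠ 0).card ≤ N₀ + 1 := by
    intro i
    refine le_trans (Finset.card_le_card ?_) (hrow i)
    intro k hk
    simp only [Finset.mem_filter, Finset.mem_univ, true_and] at hk ⊢
    rw [Bmat_apply] at hk
    intro h0
    apply hk
    simp [h0]
  set T : Fin n → Finset (Fin n) := fun k => Finset.univ.filter (fun i => Bmat At i k ≠ 0)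
    with hT
  have key : ∀ k, (At k k)⁻¹ * (∑ i, Bmat At i k * v i)^2
      ≤ ((N₀:ℝ)+1) * ∑ i ∈ T k, At i i * v i^2 := by
    intro k
    have hsum : ∑ i, Bmat At i k * v i = ∑ i ∈ T k, Bmat At i k * v i := by
      rw [hT]
      exact (Finset.sum_filter_of_ne fun i _ h => left_ne_zero_of_mul h).symm
    have hCS := Finset.sum_mul_sq_le_sq_mul_sq (T k)
      (fun i => Bmat At i k * (Real.sqrt (At i i))⁻¹) (fun i => Real.sqrt (At i i) * v i)
    have e1 : ∀ i : Fin n,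
        (Bmat At i k * (Real.sqrt (At i i))⁻¹) * (Real.sqrt (At i i) * v i)
          = Bmat At i k * v i := by
      intro i
      have hs : Real.sqrt (At i i) ≠ 0 := ne_of_gt (Real.sqrt_pos.mpr (hd i))
      calc (Bmat At i k * (Real.sqrt (At i i))⁻¹) * (Real.sqrt (At i i) * v i)
          = ((Real.sqrt (At i i))⁻¹ * Real.sqrt (At i i)) * (Bmat At i k * v i) := by ring
        _ = Bmat At i k * v i := by rw [inv_mul_cancel₀ hs, one_mul]
    have e2 : ∀ i : Fin n, (Bmat At i k * (Real.sqrt (At i i))⁻¹)^2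
        = (Bmat At i k)^2 * (At i i)⁻¹ := by
      intro i
      rw [mul_pow, inv_pow, Real.sq_sqrt (hd i).le]
    have e3 : ∀ i : Fin n, (Real.sqrt (At i i) * v i)^2 = At i i * v i ^ 2 := by
      intro i
      rw [mul_pow, Real.sq_sqrt (hd i).le]
    rw [Finset.sum_congr rfl fun i _ => e1 i, Finset.sum_congr rfl fun i _ => e2 i,
      Finset.sum_congr rfl fun i _ => e3 i] at hCS
    have hfb : ∑ i ∈ T k, (Bmat At i k)^2 * (At i i)⁻¹ ≤ ((N₀:ℝ)+1) * At k k := by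
      have hstep : ∀ i ∈ T k, (Bmat At i k)^2 * (At i i)⁻¹ ≤ At k k := by
        intro i _
        have h1 : (Bmat At i k)^2 ≤ At i i * At k k := by
          rw [Bmat_apply]
          split
          · exact aux_cs hPD i k
          · simpa using mul_nonneg (hd i).le (hd k).le
        calc (Bmat At i k)^2 * (At i i)⁻¹ ≤ (At i i * At k k) * (At i i)⁻¹ :=
            mul_le_mul_of_nonneg_right h1 (inv_nonneg.mpr (hd i).le)
          _ = At k k := by
              rw [mul_comm (At i i), mul_assoc, mul_inv_cancel₀ (ne_of_gt (hd i)), mul_one]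
      calc ∑ i ∈ T k, (Bmat At i k)^2 * (At i i)⁻¹ ≤ ∑ _i ∈ T k, At k k :=
          Finset.sum_le_sum hstep
        _ = ((T k).card : ℝ) * At k k := by rw [Finset.sum_const, nsmul_eq_mul]
        _ ≤ ((N₀:ℝ)+1) * At k k := by
            apply mul_le_mul_of_nonneg_right _ (hd k).le
            have := hcolB k
            push_cast
            exact_mod_cast this
    have hg0 : 0 ≤ ∑ i ∈ T k, At i i * v i ^ 2 :=
      Finset.sum_nonneg fun i _ => mul_nonneg (hd i).le (sq_nonneg _)
    have hfinal : (∑ i, Bmat At i k * v i)^2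
        ≤ (((N₀:ℝ)+1) * At k k) * ∑ i ∈ T k, At i i * v i^2 := by
      rw [hsum]
      exact le_trans hCS (mul_le_mul_of_nonneg_right hfb hg0)
    calc (At k k)⁻¹ * (∑ i, Bmat At i k * v i)^2
        ≤ (At k k)⁻¹ * ((((N₀:ℝ)+1) * At k k) * ∑ i ∈ T k, At i i * v i^2) :=
          mul_le_mul_of_nonneg_left hfinal (inv_nonneg.mpr (hd k).le)
      _ = ((At k k)⁻¹ * At k k) * (((N₀:ℝ)+1) * ∑ i ∈ T k, At i i * v i^2) := by ring
      _ = ((N₀:ℝ)+1) * ∑ i ∈ T k, At i i * v i^2 := by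
          rw [inv_mul_cancel₀ (ne_of_gt (hd k)), one_mul]
  have hswap : ∑ k, ∑ i ∈ T k, At i i * v i^2
      ≤ ((N₀:ℝ)+1) * ∑ i, At i i * v i ^ 2 := by
    have e : ∑ k, ∑ i ∈ T k, At i i * v i^2
        = ∑ i, (((Finset.univ.filter fun k => Bmat At i k ≠ 0).card : ℝ)) * (At i i * v i^2) := by
      rw [hT]
      simp only [Finset.sum_filter]
      rw [Finset.sum_comm]
      refine Finset.sum_congr rfl fun i _ => ?_
      rw [← Finset.sum_filter, Finset.sum_const, nsmul_eq_mul]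
    rw [e, Finset.mul_sum]
    refine Finset.sum_le_sum fun i _ => ?_
    apply mul_le_mul_of_nonneg_right _ (mul_nonneg (hd i).le (sq_nonneg _))
    have := hrowB i
    exact_mod_cast this
  have hP0 : 0 ≤ ∑ i, At i i * v i ^ 2 :=
    Finset.sum_nonneg fun i _ => mul_nonneg (hd i).le (sq_nonneg _)
  calc ∑ k, (At k k)⁻¹ * (∑ i, Bmat At i k * v i)^2
      ≤ ∑ k, ((N₀:ℝ)+1) * ∑ i ∈ T k, At i i * v i^2 :=
        Finset.sum_le_sum fun k _ => key k
    _ = ((N₀:ℝ)+1) * ∑ k, ∑ i ∈ T k, At i i * v i^2 := by rw [Finset.mul_sum]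
    _ ≤ ((N₀:ℝ)+1) * (((N₀:ℝ)+1) * ∑ i, At i i * v i ^ 2) :=
        mul_le_mul_of_nonneg_left hswap hN0
    _ ≤ 4*((N₀:ℝ)+1)^2 * ∑ i, At i i * v i ^ 2 := by nlinarith

end


/-- Jacobi–Gauss–Seidel symmetrization equivalence.  Let `Ã = D + L + Lᵀ`
be SPD with diagonal `D` and strictly lower-triangular part `L`, `S = (D+L)⁻¹` the forward
Gauss–Seidel operator and `S̄ = Sᵀ + S − SᵀÃS` its symmetrization.  Then
`S̄ = (D+L)⁻ᵀ D (D+L)⁻¹`, `S̄` is SPD, and if each row of `Ã` has at most `N₀` nonzero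
off-diagonal entries, the quadratic forms of `S̄⁻¹` and `D` are uniformly equivalent with a
constant `c(N₀)` depending only on `N₀`. -/
theorem stmt11 (N₀ : ℕ) :
    ∃ c : ℝ, 0 < c ∧
      ∀ (n : ℕ) (At : Matrix (Fin n) (Fin n) ℝ), At.PosDef →
        (∀ i : Fin n, {j : Fin n | j ≠ i ∧ At i j ≠ 0}.ncard ≤ N₀) →
        ∀ (D L S Sb : Matrix (Fin n) (Fin n) ℝ),
          D = Matrix.diagonal (fun i => At i i) →
          L = Matrix.of (fun (i j : Fin n) => if (j : ℕ) < (i : ℕ) then At i j else 0) →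
          S = (D + L)⁻¹ →
          Sb = Sᵀ + S - Sᵀ * At * S →
          Sb = ((D + L)⁻¹)ᵀ * D * (D + L)⁻¹ ∧
          Sb.PosDef ∧
          ∀ v : Fin n → ℝ,
            c⁻¹ * (v ⬝ᵥ D.mulVec v) ≤ v ⬝ᵥ Sb⁻¹.mulVec v ∧
            v ⬝ᵥ Sb⁻¹.mulVec v ≤ c * (v ⬝ᵥ D.mulVec v) := by
  refine ⟨4*((N₀:ℝ)+1)^2, by positivity, ?_⟩
  intro n At hPD hsp D L S Sb hD hL hS hSb
  subst hSb hS hL hD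
  have hB : Matrix.diagonal (fun i => At i i) +
      Matrix.of (fun (i j : Fin n) => if (j : ℕ) < (i : ℕ) then At i j else 0) = Bmat At := rfl
  have hDm : Matrix.diagonal (fun i => At i i) = Dm At := rfl
  rw [hB, hDm]
  refine ⟨Sb_eq hPD, ?_, ?_⟩
  · rw [Sb_eq hPD]
    exact Sb_posDef hPD
  · intro v
    rw [Sb_eq hPD, Sb_inv hPD]
    have e1 : v ⬝ᵥ (Bmat At * (Dm At)⁻¹ * (Bmat At)ᵀ).mulVec v
        = ∑ k, (At k k)⁻¹ * (∑ i, Bmat At i k * v i)^2 := qSbinv hPD v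
    have e2 : v ⬝ᵥ (Dm At).mulVec v = ∑ i, At i i * v i ^ 2 := qD v
    rw [e1, e2]
    exact ⟨lower_bd hPD N₀ v, upper_bd hPD N₀ hsp v⟩
end

section
/- (Nodal averaging on a pair of simplices.) Let τ⁺ and τ⁻ be two d-simplices in ℝ^d sharing a common (d−1)-face e, with shape-regularity constant γ₀ (ratio of circumradius to inradius bounded by γ₀) and diam comparable to h. Let v be piecewise affine on ω = τ⁺ ∪ τ⁻ (affine on each simplex), let z be a vertex of e, and let [v] = v|_{τ⁺} − v|_{τ⁻} denote the jump across e and Q the L²(e)-projection onto constants. Then |v|_{τ⁺}(z) − v|_{τ⁻}(z)| ≤ C ( h^{1−d/2} ‖∇v‖_{L²(ω)} + h^{1/2−d/2} ‖Q[v]‖_{L²(e)} ), with C depending only on d and γ₀. -/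
open MeasureTheory
open scoped RealInnerProductSpace

noncomputable section

/-- The inradius of a set: the supremum of radii of balls contained in it. -/
def inrad {d : ℕ} (s : Set (EuclideanSpace ℝ (Fin d))) : ℝ :=
  sSup {r : ℝ | ∃ c, Metric.ball c r ⊆ s}

private lemma exists_ball_subset_of_inrad {d : ℕ} {T : Set (EuclideanSpace ℝ (Fin d))}
    {γ₀ h : ℝ} (hγ : 0 < γ₀) (hh : 0 < h) (hT : h ≤ γ₀ * inrad T) :
    ∃ c, Metric.ball c (h / (2 * γ₀)) ⊆ T := by
  have hne : {r : ℝ | ∃ c, Metric.ball c r ⊆ T}.Nonempty :=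
    ⟨-1, 0, by simp [Metric.ball_eq_empty.2 (by norm_num : (-1:ℝ) ≤ 0)]⟩
  have hlt : h / (2 * γ₀) < sSup {r : ℝ | ∃ c, Metric.ball c r ⊆ T} := by
    have h1 : h / γ₀ ≤ inrad T := (div_le_iff₀' hγ).2 hT
    have h2 : h / (2 * γ₀) < h / γ₀ :=
      div_lt_div_of_pos_left hh hγ (by linarith)
    exact h2.trans_le h1
  obtain ⟨r', hr'mem, hr'⟩ := exists_lt_of_lt_csSup hne hlt
  obtain ⟨c, hc⟩ := hr'mem
  exact ⟨c, (Metric.ball_subset_ball hr'.le).trans hc⟩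

private lemma volume_lb {d : ℕ} [Nonempty (Fin d)] {T : Set (EuclideanSpace ℝ (Fin d))}
    {c : EuclideanSpace ℝ (Fin d)} {r : ℝ} (hr : 0 ≤ r) (hc : Metric.ball c r ⊆ T)
    (hT : IsCompact T) :
    r ^ d * (volume (Metric.ball (0 : EuclideanSpace ℝ (Fin d)) 1)).toReal ≤
      (volume T).toReal := by
  have h1 : volume (Metric.ball c r) ≤ volume T := measure_mono hc
  rw [Measure.addHaar_ball _ _ hr, finrank_euclideanSpace_fin] at h1
  have h2 := ENNReal.toReal_mono hT.measure_lt_top.ne h1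
  rwa [ENNReal.toReal_mul, ENNReal.toReal_ofReal (pow_nonneg hr _)] at h2

set_option maxHeartbeats 4000000

/-- nodal averaging on a pair of simplices.  Let `τ⁺, τ⁻` be two
`d`-simplices in `ℝ^d` (vertex lists `p∘castSucc` and `p∘succ`) sharing the common
`(d−1)`-face `e = conv{p₁,…,p_d}`, with disjoint interiors, diameters `≤ h` and inradii
`≥ h/γ₀` (shape regularity and diameter comparable to `h`).  Let `v` be piecewise affine on
`ω = τ⁺ ∪ τ⁻` (pieces `v⁺, v⁻`), `z = p_j` a vertex of `e`, and `Q[v]` the mean of the jump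
`v⁺ − v⁻` over `e` w.r.t. the `(d−1)`-dimensional Hausdorff measure.  Then
`|v⁺(z) − v⁻(z)| ≤ C (h^{1−d/2}‖∇v‖_{L²(ω)} + h^{1/2−d/2}‖Q[v]‖_{L²(e)})`,
with `C` depending only on `d` and `γ₀`. -/
theorem stmt14 (d : ℕ) (hd : 1 ≤ d) (γ₀ : ℝ) (hγ₀ : 0 < γ₀) :
    ∃ C : ℝ, 0 < C ∧
      ∀ (h : ℝ), 0 < h →
      ∀ p : Fin (d + 2) → EuclideanSpace ℝ (Fin d),
        AffineIndependent ℝ (p ∘ Fin.castSucc) →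
        AffineIndependent ℝ (p ∘ Fin.succ) →
        ∀ (Tp Tm e : Set (EuclideanSpace ℝ (Fin d))),
          Tp = convexHull ℝ (Set.range (p ∘ Fin.castSucc)) →
          Tm = convexHull ℝ (Set.range (p ∘ Fin.succ)) →
          e = convexHull ℝ (Set.range fun j : Fin d => p j.castSucc.succ) →
          Disjoint (interior Tp) (interior Tm) →
          Metric.diam Tp ≤ h → Metric.diam Tm ≤ h →
          h ≤ γ₀ * inrad Tp → h ≤ γ₀ * inrad Tm →
          ∀ (vp vm : EuclideanSpace ℝ (Fin d) →ᵃ[ℝ] ℝ) (j : Fin d),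
            -- squared broken-gradient norm over ω (gradients of affine maps are constant)
            ∀ (gradsq : ℝ),
              gradsq =
                ‖LinearMap.toContinuousLinearMap vp.linear‖ ^ 2 * (volume Tp).toReal +
                ‖LinearMap.toContinuousLinearMap vm.linear‖ ^ 2 * (volume Tm).toReal →
            -- the mean value of the jump over e
            ∀ (Qm : ℝ),
              Qm = ((Measure.hausdorffMeasure ((d : ℝ) - 1) e).toReal)⁻¹ *
                ∫ x in e, (vp x - vm x) ∂(Measure.hausdorffMeasure ((d : ℝ) - 1)) →
            |vp (p j.castSucc.succ) - vm (p j.castSucc.succ)| ≤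
              C * (h ^ ((1 : ℝ) - d / 2) * Real.sqrt gradsq +
                h ^ ((1 : ℝ) / 2 - d / 2) *
                  Real.sqrt (Qm ^ 2 *
                    (Measure.hausdorffMeasure ((d : ℝ) - 1) e).toReal)) := by
  classical
  haveI : NeZero d := ⟨by omega⟩
  haveI : Nonempty (Fin d) := ⟨⟨0, hd⟩⟩
  set κd : ℝ := (volume (Metric.ball (0 : EuclideanSpace ℝ (Fin d)) 1)).toReal with hκd_def
  have hκd : 0 < κd := ENNReal.toReal_pos
    (ne_of_gt (Metric.measure_ball_pos _ _ one_pos)) measure_ball_lt_top.ne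
  set κe : ℝ := (2 / Real.sqrt ((d : ℝ) - 1)) ^ (d - 1) with hκe_def
  have hκe : 0 < κe := by
    rcases eq_or_lt_of_le hd with h1 | h2
    · rw [hκe_def, ← h1]
      norm_num
    · have hs : (0:ℝ) < Real.sqrt ((d : ℝ) - 1) := by
        apply Real.sqrt_pos.2
        have : (2:ℝ) ≤ (d:ℝ) := by exact_mod_cast h2
        linarith
      exact pow_pos (div_pos two_pos hs) _
  set C₁ : ℝ := 2 * (2 * γ₀) ^ ((d : ℝ) / 2) / Real.sqrt κd with hC₁_def
  set C₂ : ℝ := (2 * γ₀) ^ (((d : ℝ) - 1) / 2) / Real.sqrt κe with hC₂_def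
  have hC₁ : 0 ≤ C₁ := by
    apply div_nonneg _ (Real.sqrt_nonneg _)
    positivity
  have hC₂ : 0 ≤ C₂ := by
    apply div_nonneg _ (Real.sqrt_nonneg _)
    positivity
  refine ⟨1 + C₁ + C₂, by linarith, ?_⟩
  intro h hh p hip him Tp Tm e hTp hTm he hdisj hdiamp hdiamm hinp hinm vp vm j gradsq
    hgrad Qm hQm
  -- notation
  set q : Fin (d + 1) → EuclideanSpace ℝ (Fin d) := p ∘ Fin.castSucc with hq_def
  set face : Fin d → EuclideanSpace ℝ (Fin d) := fun j : Fin d => p j.castSucc.succ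
    with hface_def
  have hqface : ∀ j : Fin d, q (Fin.succ j) = face j := fun _ => rfl
  set r₀ : ℝ := h / (2 * γ₀) with hr₀_def
  have hr₀ : 0 < r₀ := by positivity
  set cvp := LinearMap.toContinuousLinearMap vp.linear with hcvp_def
  set cvm := LinearMap.toContinuousLinearMap vm.linear with hcvm_def
  -- compactness
  have hTpc : IsCompact Tp := by
    rw [hTp]; exact (Set.finite_range _).isCompact_convexHull ℝ
  have hTmc : IsCompact Tm := by
    rw [hTm]; exact (Set.finite_range _).isCompact_convexHull ℝ
  have hec : IsCompact e := by
    rw [he]; exact (Set.finite_range _).isCompact_convexHull ℝ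
  have heTp : e ⊆ Tp := by
    rw [he, hTp]
    apply convexHull_mono
    rintro x ⟨j', rfl⟩
    exact ⟨Fin.succ j', (hqface j').symm ▸ rfl⟩
  -- gradient norms vs gradsq
  have hgrad0 : 0 ≤ gradsq := by
    rw [hgrad]
    have := ENNReal.toReal_nonneg (a := volume Tp)
    have := ENNReal.toReal_nonneg (a := volume Tm)
    positivity
  have hnormbound : ∀ (T : Set (EuclideanSpace ℝ (Fin d))) (cv : EuclideanSpace ℝ (Fin d) →L[ℝ] ℝ),
      IsCompact T → h ≤ γ₀ * inrad T → ‖cv‖ ^ 2 * (volume T).toReal ≤ gradsq →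
      ‖cv‖ ≤ Real.sqrt gradsq / Real.sqrt (r₀ ^ d * κd) := by
    intro T cv hTc hin hb
    obtain ⟨c, hc⟩ := exists_ball_subset_of_inrad hγ₀ hh hin
    have hvol : r₀ ^ d * κd ≤ (volume T).toReal := volume_lb hr₀.le hc hTc
    have hvκ : 0 < r₀ ^ d * κd := by positivity
    have h1 : ‖cv‖ ^ 2 ≤ gradsq / (r₀ ^ d * κd) := by
      rw [le_div_iff₀ hvκ]
      calc ‖cv‖ ^ 2 * (r₀ ^ d * κd) ≤ ‖cv‖ ^ 2 * (volume T).toReal := by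
            apply mul_le_mul_of_nonneg_left hvol (by positivity)
        _ ≤ gradsq := hb
    calc ‖cv‖ = Real.sqrt (‖cv‖ ^ 2) := (Real.sqrt_sq (norm_nonneg _)).symm
      _ ≤ Real.sqrt (gradsq / (r₀ ^ d * κd)) := Real.sqrt_le_sqrt h1
      _ = Real.sqrt gradsq / Real.sqrt (r₀ ^ d * κd) := Real.sqrt_div hgrad0 _
  have hvpb : ‖cvp‖ ≤ Real.sqrt gradsq / Real.sqrt (r₀ ^ d * κd) := by
    apply hnormbound Tp cvp hTpc hinp
    rw [hgrad]
    have h1 : 0 ≤ ‖cvm‖ ^ 2 * (volume Tm).toReal :=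
      mul_nonneg (by positivity) ENNReal.toReal_nonneg
    linarith
  have hvmb : ‖cvm‖ ≤ Real.sqrt gradsq / Real.sqrt (r₀ ^ d * κd) := by
    apply hnormbound Tm cvm hTmc hinm
    rw [hgrad]
    have h1 : 0 ≤ ‖cvp‖ ^ 2 * (volume Tp).toReal :=
      mul_nonneg (by positivity) ENNReal.toReal_nonneg
    linarith
  -- the face geometry
  have hfaceind : AffineIndependent ℝ face := by
    have : face = (p ∘ Fin.castSucc) ∘ Fin.succ := rfl
    rw [this]
    exact hip.comp_embedding ⟨Fin.succ, Fin.succ_injective _⟩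
  set a : EuclideanSpace ℝ (Fin d) := q 0 with ha_def
  set b : EuclideanSpace ℝ (Fin d) := face 0 with hb_def
  have haTp : a ∈ Tp := by
    rw [hTp]; exact subset_convexHull _ _ ⟨0, rfl⟩
  have hbTp : b ∈ Tp := by
    rw [hTp]
    exact subset_convexHull _ _ ⟨Fin.succ 0, hqface 0⟩
  set V : Submodule ℝ (EuclideanSpace ℝ (Fin d)) :=
    vectorSpan ℝ (Set.range face) with hV_def
  have hVrank : Module.finrank ℝ V = d - 1 := by
    apply hfaceind.finrank_vectorSpan
    rw [Fintype.card_fin]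
    omega
  have ha_notin : a ∉ affineSpan ℝ (Set.range face) := by
    have h0 := hip.notMem_affineSpan_diff 0 Set.univ
    have hrange : Set.range face = (p ∘ Fin.castSucc) '' (Set.univ \ {0}) := by
      ext x
      constructor
      · rintro ⟨j', rfl⟩
        exact ⟨Fin.succ j', ⟨trivial, Fin.succ_ne_zero j'⟩, hqface j'⟩
      · rintro ⟨i, ⟨-, hi0⟩, rfl⟩
        obtain ⟨j', rfl⟩ := Fin.exists_succ_eq.2 (by simpa using hi0)
        exact ⟨j', (hqface j').symm⟩
    rw [hrange]
    exact h0
  set n₁ : EuclideanSpace ℝ (Fin d) := (a - b) - (Submodule.orthogonalProjectionOnto V (a - b) : _)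
    with hn₁_def
  have hn₁V : n₁ ∈ Vᗮ := Submodule.sub_starProjection_mem_orthogonal _
  have hn₁0 : n₁ ≠ 0 := by
    intro h0
    apply ha_notin
    have hab : a - b ∈ V := by
      have : a - b = (Submodule.orthogonalProjectionOnto V (a - b) : _) := by
        have := sub_eq_zero.1 h0
        exact this
      rw [this]
      exact Submodule.coe_mem _
    have hbmem : b ∈ affineSpan ℝ (Set.range face) :=
      mem_affineSpan ℝ ⟨0, rfl⟩
    have := (AffineSubspace.vsub_right_mem_direction_iff_mem hbmem a).1
    apply this
    rw [direction_affineSpan]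
    exact hab
  set n : EuclideanSpace ℝ (Fin d) := ‖n₁‖⁻¹ • n₁ with hn_def
  have hnV : n ∈ Vᗮ := Submodule.smul_mem _ _ hn₁V
  have hnn : ‖n‖ = 1 := by
    rw [hn_def, norm_smul, norm_inv, norm_norm, inv_mul_cancel₀ (norm_ne_zero_iff.2 hn₁0)]
  have hVn : ∀ v ∈ V, ⟪v, n⟫ = 0 := fun v hv =>
    (Submodule.mem_orthogonal V n).1 hnV v hv
  set D : ℝ := ⟪a - b, n⟫ with hD_def
  have hD_eq : D = ‖n₁‖ := by
    rw [hD_def]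
    have hsplit : a - b = n₁ + (Submodule.orthogonalProjectionOnto V (a - b) : _) := by
      rw [hn₁_def]; abel
    rw [hsplit, inner_add_left, hVn _ (Submodule.coe_mem _) , hn_def,
      real_inner_smul_right, real_inner_self_eq_norm_sq]
    have : ‖n₁‖ ≠ 0 := norm_ne_zero_iff.2 hn₁0
    field_simp
    ring
  have hD : 0 < D := by rw [hD_eq]; exact norm_pos_iff.2 hn₁0
  have hDh : D ≤ h := by
    calc D ≤ ‖a - b‖ * ‖n‖ := real_inner_le_norm _ _
      _ = dist a b := by rw [hnn, mul_one, dist_eq_norm]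
      _ ≤ Metric.diam Tp := Metric.dist_le_diam_of_mem hTpc.isBounded haTp hbTp
      _ ≤ h := hdiamp
  -- convex representation of points of Tp
  have rep : ∀ x ∈ Tp, ∃ W : Fin (d + 1) → ℝ,
      (∀ i, 0 ≤ W i) ∧ (∑ i, W i) = 1 ∧ (∑ i, W i • q i) = x := by
    intro x hx
    rw [hTp, convexHull_range_eq_exists_affineCombination] at hx
    obtain ⟨s, w, hw0, hw1, hx⟩ := hx
    refine ⟨fun i => if i ∈ s then w i else 0, fun i => ?_, ?_, ?_⟩
    · by_cases hi : i ∈ s <;> simp [hi, hw0 i]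
    · rw [Finset.sum_ite_mem, Finset.univ_inter, hw1]
    · rw [← hx, Finset.affineCombination_eq_linear_combination _ _ _ hw1]
      simp only [ite_smul, zero_smul]
      rw [Finset.sum_ite_mem, Finset.univ_inter]
  -- the value of the linear functional on convex combinations
  have ℓrep : ∀ W : Fin (d + 1) → ℝ, (∑ i, W i) = 1 →
      ⟪(∑ i, W i • q i) - b, n⟫ = W 0 * D := by
    intro W hW
    have hsum : (∑ i, W i • q i) - b = ∑ i, W i • (q i - b) := by
      simp only [smul_sub]
      rw [Finset.sum_sub_distrib, ← Finset.sum_smul, hW, one_smul]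
    rw [hsum, sum_inner, Fin.sum_univ_succ]
    have hz : ∀ j' : Fin d, ⟪W (Fin.succ j') • (q (Fin.succ j') - b), n⟫ = 0 := by
      intro j'
      rw [real_inner_smul_left]
      have hmem : q (Fin.succ j') - b ∈ V := by
        rw [hqface j', hb_def, hV_def]
        exact vsub_mem_vectorSpan ℝ (Set.mem_range_self (f := face) j')
          (Set.mem_range_self (f := face) 0)
      rw [hVn _ hmem, mul_zero]
    rw [Finset.sum_congr rfl (fun i _ => hz i), Finset.sum_const, smul_zero, add_zero,
      real_inner_smul_left, hD_def, ha_def]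
  have hl_mem : ∀ x ∈ Tp, 0 ≤ ⟪x - b, n⟫ ∧ ⟪x - b, n⟫ ≤ D := by
    intro x hx
    obtain ⟨W, hW0, hW1, hWx⟩ := rep x hx
    have hval : ⟪x - b, n⟫ = W 0 * D := by rw [← hWx]; exact ℓrep W hW1
    have hW0le : W 0 ≤ 1 := by
      rw [← hW1]
      exact Finset.single_le_sum (fun i _ => hW0 i) (Finset.mem_univ 0)
    constructor
    · rw [hval]; exact mul_nonneg (hW0 0) hD.le
    · rw [hval]
      nlinarith [hW0 0]
  -- central projection onto the face
  have key : ∀ x ∈ Tp, ⟪x - b, n⟫ < D →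
      a + (D / (D - ⟪x - b, n⟫)) • (x - a) ∈ e := by
    intro x hx hlt
    obtain ⟨W, hW0, hW1, hWx⟩ := rep x hx
    set s : ℝ := ⟪x - b, n⟫ with hs_def
    have hW0D : W 0 * D = s := by rw [← ℓrep W hW1, hWx]
    set t : ℝ := D / (D - s) with ht_def
    have hDs : 0 < D - s := sub_pos.2 hlt
    have ht0 : 0 ≤ t := div_nonneg hD.le hDs.le
    have hW0val : W 0 = s / D := by
      field_simp
      linarith [hW0D]
    have hcoef : 1 - t + t * W 0 = 0 := by
      rw [hW0val, ht_def]
      field_simp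
      ring
    have hsum : (∑ j' : Fin d, t * W (Fin.succ j')) = 1 := by
      have hs1 : (∑ j' : Fin d, W (Fin.succ j')) = 1 - W 0 := by
        have := hW1
        rw [Fin.sum_univ_succ] at this
        linarith
      rw [← Finset.mul_sum, hs1, hW0val, ht_def]
      field_simp
    have hpt : a + t • (x - a) = ∑ j' : Fin d, (t * W (Fin.succ j')) • face j' := by
      have h1 : t • x = (t * W 0) • a + ∑ j' : Fin d, (t * W (Fin.succ j')) • q (Fin.succ j') := by
        rw [← hWx, Finset.smul_sum, Fin.sum_univ_succ]
        simp [smul_smul]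
        rfl
      have h2 : a + t • (x - a) = (1 - t + t * W 0) • a +
          ∑ j' : Fin d, (t * W (Fin.succ j')) • q (Fin.succ j') := by
        rw [smul_sub, h1]
        module
      rw [h2, hcoef, zero_smul, zero_add]
      exact Finset.sum_congr rfl fun j' _ => by rw [hqface j']
    rw [he, hpt]
    have := affineCombination_mem_convexHull (s := Finset.univ)
      (v := face) (w := fun j' => t * W (Fin.succ j'))
      (fun i _ => mul_nonneg ht0 (hW0 _)) hsum
    rwa [Finset.affineCombination_eq_linear_combination _ _ _ hsum] at this
  -- the inscribed ball and the center
  obtain ⟨c, hcball⟩ := exists_ball_subset_of_inrad hγ₀ hh hinp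
  have hcTp : c ∈ Tp := hcball (Metric.mem_ball_self hr₀)
  set sc : ℝ := ⟪c - b, n⟫ with hsc_def
  have hsc_lb : r₀ / 2 ≤ sc := by
    have hmem : c - (r₀ / 2) • n ∈ Tp := by
      apply hcball
      rw [Metric.mem_ball, dist_eq_norm]
      simp only [sub_sub_cancel_left]  -- ‖ -(r₀/2)•n ‖
      rw [norm_neg, norm_smul, hnn, mul_one, Real.norm_eq_abs, abs_of_pos (by positivity)]
      linarith
    have := (hl_mem _ hmem).1
    have hcalc : ⟪c - (r₀ / 2) • n - b, n⟫ = sc - r₀ / 2 := by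
      rw [show c - (r₀ / 2) • n - b = (c - b) - (r₀ / 2) • n by abel]
      rw [inner_sub_left, real_inner_smul_left, real_inner_self_eq_norm_sq, hnn]
      rw [hsc_def]; ring
    rw [hcalc] at this
    linarith
  have hsc_ub : sc ≤ D - r₀ / 2 := by
    have hmem : c + (r₀ / 2) • n ∈ Tp := by
      apply hcball
      rw [Metric.mem_ball, dist_eq_norm]
      simp only [add_sub_cancel_left]
      rw [norm_smul, hnn, mul_one, Real.norm_eq_abs, abs_of_pos (by positivity)]
      linarith
    have := (hl_mem _ hmem).2
    have hcalc : ⟪c + (r₀ / 2) • n - b, n⟫ = sc + r₀ / 2 := by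
      rw [show c + (r₀ / 2) • n - b = (c - b) + (r₀ / 2) • n by abel]
      rw [inner_add_left, real_inner_smul_left, real_inner_self_eq_norm_sq, hnn]
      rw [hsc_def]; ring
    rw [hcalc] at this
    linarith
  have hscD : sc < D := by linarith
  set t₀ : ℝ := D / (D - sc) with ht₀_def
  have hDsc : 0 < D - sc := by linarith
  have ht₀1 : 1 ≤ t₀ := by
    rw [ht₀_def, le_div_iff₀ hDsc]
    nlinarith
  have ht₀ : 0 < t₀ := lt_of_lt_of_le one_pos ht₀1
  set y₀ : EuclideanSpace ℝ (Fin d) := a + t₀ • (c - a) with hy₀_def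
  have hy₀e : y₀ ∈ e := key c hcTp hscD
  -- ball inside the face
  have hball_e : ∀ w ∈ V, ‖w‖ < r₀ → y₀ + w ∈ e := by
    intro w hwV hwn
    set u : EuclideanSpace ℝ (Fin d) := t₀⁻¹ • w with hu_def
    have huV : u ∈ V := Submodule.smul_mem _ _ hwV
    have hun : ‖u‖ < r₀ := by
      rw [hu_def, norm_smul, Real.norm_eq_abs, abs_of_pos (by positivity)]
      calc t₀⁻¹ * ‖w‖ ≤ 1 * ‖w‖ := by
            apply mul_le_mul_of_nonneg_right _ (norm_nonneg _)
            rw [inv_le_one_iff₀]; right; exact ht₀1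
        _ < r₀ := by rwa [one_mul]
    have hxTp : c + u ∈ Tp := by
      apply hcball
      rw [Metric.mem_ball, dist_eq_norm, add_sub_cancel_left]
      exact hun
    have hsx : ⟪c + u - b, n⟫ = sc := by
      rw [show c + u - b = (c - b) + u by abel, inner_add_left, hVn u huV, add_zero]
    have hkey := key (c + u) hxTp (by rw [hsx]; exact hscD)
    rw [hsx] at hkey
    have : a + (D / (D - sc)) • (c + u - a) = y₀ + w := by
      rw [← ht₀_def, hy₀_def]
      rw [show c + u - a = (c - a) + u by abel, smul_add, hu_def, smul_smul,
        mul_inv_cancel₀ (ne_of_gt ht₀), one_smul]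
      abel
    rwa [this] at hkey
  -- Hausdorff measure bounds for the face
  have hdim0 : (0:ℝ) ≤ (d : ℝ) - 1 := by
    have : (1:ℝ) ≤ (d:ℝ) := by exact_mod_cast hd
    linarith
  have Hbounds : ENNReal.ofReal (κe * r₀ ^ (d - 1)) ≤
      Measure.hausdorffMeasure ((d : ℝ) - 1) e ∧
      Measure.hausdorffMeasure ((d : ℝ) - 1) e < (⊤ : ENNReal) := by
    rcases eq_or_lt_of_le hd with h1 | h2
    · -- the one-dimensional case : `e` is a single point
      subst h1
      have hexp : ((1:ℕ):ℝ) - 1 = 0 := by norm_num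
      have hrange : Set.range face = {b} := by
        ext x
        constructor
        · rintro ⟨j', rfl⟩
          rw [Subsingleton.elim j' 0]
          exact rfl
        · rintro rfl
          exact ⟨0, rfl⟩
      have hesing : e = {b} := by rw [he, hrange, convexHull_singleton]
      rw [hexp, hesing, Measure.hausdorffMeasure_zero_singleton]
      constructor
      · have hκe1 : κe = 1 := by
          rw [hκe_def]
          norm_num
        have hr1 : r₀ ^ (1 - 1) = 1 := by norm_num
        rw [hκe1, hr1, mul_one, ENNReal.ofReal_one]
      · exact ENNReal.one_lt_top
    · -- the higher-dimensional case
      set m : ℕ := Module.finrank ℝ V with hm_def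
      have hm1 : 1 ≤ m := by omega
      have hcast : ((m:ℕ):ℝ) = (d:ℝ) - 1 := by
        rw [hVrank, Nat.cast_sub hd, Nat.cast_one]
      set B := stdOrthonormalBasis ℝ V with hB_def
      set ψ : EuclideanSpace ℝ (Fin m) → EuclideanSpace ℝ (Fin d) :=
        fun x => y₀ + ((B.repr.symm x : V) : EuclideanSpace ℝ (Fin d)) with hψ_def
      have hψiso : Isometry ψ := by
        apply Isometry.of_dist_eq
        intro x y
        simp only [hψ_def]
        rw [dist_eq_norm, dist_eq_norm, add_sub_add_left_eq_sub, ← Submodule.coe_sub,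
          ← map_sub, Submodule.norm_coe, LinearIsometryEquiv.norm_map]
      have hψsub : ψ '' Metric.ball 0 r₀ ⊆ e := by
        rintro - ⟨x, hx, rfl⟩
        apply hball_e _ (Submodule.coe_mem _)
        rw [Submodule.norm_coe, LinearIsometryEquiv.norm_map]
        simpa [Metric.mem_ball, dist_eq_norm] using hx
      set K : NNReal := (Fintype.card (Fin m) : NNReal) ^ ((1 / (2:ENNReal)).toReal) with hK_def
      have hanti : AntilipschitzWith K (WithLp.equiv 2 (∀ _ : Fin m, ℝ)) :=
        PiLp.antilipschitzWith_ofLp 2 _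
      have hlip : LipschitzWith 1 (WithLp.equiv 2 (∀ _ : Fin m, ℝ)) :=
        PiLp.lipschitzWith_ofLp 2 _
      have hKval : (K:ℝ) = Real.sqrt m := by
        rw [hK_def]
        rw [show ((1 / (2:ENNReal)).toReal) = 1/2 by simp]
        rw [NNReal.coe_rpow, NNReal.coe_natCast, Fintype.card_fin, Real.sqrt_eq_rpow]
      have hm0R : (0:ℝ) < m := by exact_mod_cast hm1
      have hK0 : 0 < (K:ℝ) := by rw [hKval]; exact Real.sqrt_pos.2 hm0R
      have hpi : (Measure.hausdorffMeasure ((d:ℝ)-1) : Measure (∀ _ : Fin m, ℝ)) = volume := by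
        have h0 := MeasureTheory.hausdorffMeasure_pi_real (ι := Fin m)
        rw [Fintype.card_fin, hcast] at h0
        exact h0
      constructor
      · -- lower bound
        set r₁ : ℝ := r₀ / K with hr₁_def
        have hr₁0 : 0 < r₁ := div_pos hr₀ hK0
        have hball1 : Metric.ball (0 : ∀ _ : Fin m, ℝ) r₁ ⊆
            (WithLp.equiv 2 (∀ _ : Fin m, ℝ)) '' Metric.ball 0 r₀ := by
          intro y hy
          refine ⟨(WithLp.equiv 2 _).symm y, ?_, by simp⟩
          rw [Metric.mem_ball] at hy ⊢
          have h3 := hanti.le_mul_dist ((WithLp.equiv 2 (∀ _ : Fin m, ℝ)).symm y)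
            ((WithLp.equiv 2 (∀ _ : Fin m, ℝ)).symm 0)
          simp only [Equiv.apply_symm_apply] at h3
          have h4 : (WithLp.equiv 2 (∀ _ : Fin m, ℝ)).symm 0 = 0 := rfl
          rw [h4] at h3
          calc dist ((WithLp.equiv 2 (∀ _ : Fin m, ℝ)).symm y) 0 ≤ (K:ℝ) * dist y 0 := h3
            _ < (K:ℝ) * r₁ := by exact mul_lt_mul_of_pos_left hy hK0
            _ = r₀ := by rw [hr₁_def]; field_simp
        have hchain : ENNReal.ofReal ((2*r₁)^m) ≤
            Measure.hausdorffMeasure ((d:ℝ)-1) e := by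
          calc ENNReal.ofReal ((2*r₁)^m)
              = volume (Metric.ball (0 : ∀ _ : Fin m, ℝ) r₁) := by
                rw [Real.volume_pi_ball _ hr₁0, Fintype.card_fin]
            _ = Measure.hausdorffMeasure ((d:ℝ)-1) (Metric.ball (0 : ∀ _ : Fin m, ℝ) r₁) := by
                rw [hpi]
            _ ≤ Measure.hausdorffMeasure ((d:ℝ)-1)
                ((WithLp.equiv 2 (∀ _ : Fin m, ℝ)) '' Metric.ball 0 r₀) :=
                measure_mono hball1
            _ ≤ (1:ENNReal) ^ ((d:ℝ)-1) * Measure.hausdorffMeasure ((d:ℝ)-1)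
                (Metric.ball (0 : EuclideanSpace ℝ (Fin m)) r₀) :=
                hlip.hausdorffMeasure_image_le hdim0 _
            _ = Measure.hausdorffMeasure ((d:ℝ)-1)
                (Metric.ball (0 : EuclideanSpace ℝ (Fin m)) r₀) := by
                rw [ENNReal.one_rpow, one_mul]
            _ = Measure.hausdorffMeasure ((d:ℝ)-1) (ψ '' Metric.ball 0 r₀) :=
                (hψiso.hausdorffMeasure_image (Or.inl hdim0) _).symm
            _ ≤ Measure.hausdorffMeasure ((d:ℝ)-1) e := measure_mono hψsub
        have hconst : κe * r₀ ^ (d - 1) = (2*r₁)^m := by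
          rw [hκe_def, ← hVrank, hr₁_def]
          rw [show Real.sqrt ((d:ℝ) - 1) = (K:ℝ) by rw [← hcast, hKval]]
          rw [← mul_pow]
          congr 1
          field_simp
        rw [hconst]
        exact hchain
      · -- upper bound
        have hψe : e ⊆ ψ '' Metric.closedBall 0 h := by
          intro x hx
          have hxV : x - y₀ ∈ V := by
            have hx1 : x ∈ affineSpan ℝ (Set.range face) := by
              apply convexHull_subset_affineSpan
              rw [← he]; exact hx
            have hy1 : y₀ ∈ affineSpan ℝ (Set.range face) := by
              apply convexHull_subset_affineSpan
              rw [← he]; exact hy₀e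
            have h3 := AffineSubspace.vsub_mem_direction hx1 hy1
            rwa [direction_affineSpan] at h3
          refine ⟨B.repr ⟨x - y₀, hxV⟩, ?_, ?_⟩
          · rw [Metric.mem_closedBall, dist_zero_right, LinearIsometryEquiv.norm_map]
            have hnx : ‖(⟨x - y₀, hxV⟩ : V)‖ = ‖x - y₀‖ := rfl
            rw [hnx, ← dist_eq_norm]
            exact le_trans (Metric.dist_le_diam_of_mem hTpc.isBounded (heTp hx)
              (heTp hy₀e)) hdiamp
          · simp only [hψ_def, LinearIsometryEquiv.symm_apply_apply]
            exact add_sub_cancel y₀ x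
        have hlipsymm : LipschitzWith K (WithLp.equiv 2 (∀ _ : Fin m, ℝ)).symm := by
          apply LipschitzWith.of_dist_le_mul
          intro x y
          have h3 := hanti.le_mul_dist ((WithLp.equiv 2 (∀ _ : Fin m, ℝ)).symm x)
            ((WithLp.equiv 2 (∀ _ : Fin m, ℝ)).symm y)
          simpa using h3
        have himg : Metric.closedBall (0:EuclideanSpace ℝ (Fin m)) h =
            (WithLp.equiv 2 (∀ _ : Fin m, ℝ)).symm ''
              ((WithLp.equiv 2 (∀ _ : Fin m, ℝ)) '' Metric.closedBall 0 h) := by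
          rw [Set.image_image]
          simp
        have hsubcb : (WithLp.equiv 2 (∀ _ : Fin m, ℝ)) '' Metric.closedBall 0 h ⊆
            Metric.closedBall (0 : ∀ _ : Fin m, ℝ) h := by
          rintro - ⟨x, hx, rfl⟩
          rw [Metric.mem_closedBall] at hx ⊢
          have h3 := hlip.dist_le_mul x 0
          have h4 : (WithLp.equiv 2 (∀ _ : Fin m, ℝ)) 0 = 0 := rfl
          rw [h4] at h3
          calc dist ((WithLp.equiv 2 (∀ _ : Fin m, ℝ)) x) 0 ≤ 1 * dist x 0 := by
                exact_mod_cast h3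
            _ ≤ h := by rw [one_mul]; exact hx
        calc Measure.hausdorffMeasure ((d:ℝ)-1) e
            ≤ Measure.hausdorffMeasure ((d:ℝ)-1) (ψ '' Metric.closedBall 0 h) :=
              measure_mono hψe
          _ = Measure.hausdorffMeasure ((d:ℝ)-1)
              (Metric.closedBall (0:EuclideanSpace ℝ (Fin m)) h) :=
              hψiso.hausdorffMeasure_image (Or.inl hdim0) _
          _ ≤ (K:ENNReal) ^ ((d:ℝ)-1) * Measure.hausdorffMeasure ((d:ℝ)-1)
              ((WithLp.equiv 2 (∀ _ : Fin m, ℝ)) '' Metric.closedBall 0 h) := by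
              nth_rewrite 1 [himg]
              exact hlipsymm.hausdorffMeasure_image_le hdim0 _
          _ ≤ (K:ENNReal) ^ ((d:ℝ)-1) * Measure.hausdorffMeasure ((d:ℝ)-1)
              (Metric.closedBall (0 : ∀ _ : Fin m, ℝ) h) :=
              mul_le_mul_right (measure_mono hsubcb) _
          _ = (K:ENNReal) ^ ((d:ℝ)-1) * ENNReal.ofReal ((2*h)^m) := by
              rw [hpi, Real.volume_pi_closedBall _ hh.le, Fintype.card_fin]
          _ < ⊤ := by
              apply ENNReal.mul_lt_top
              · exact ENNReal.rpow_lt_top_of_nonneg hdim0 ENNReal.coe_ne_top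
              · exact ENNReal.ofReal_lt_top
  obtain ⟨He_lb, He_ub⟩ := Hbounds
  set He : ℝ := (Measure.hausdorffMeasure ((d : ℝ) - 1) e).toReal with hHe_def
  have hHe_lb : κe * r₀ ^ (d - 1) ≤ He := by
    rw [hHe_def]
    have := ENNReal.toReal_mono He_ub.ne He_lb
    rwa [ENNReal.toReal_ofReal (by positivity)] at this
  have hHe_pos : 0 < He := lt_of_lt_of_le (by positivity) hHe_lb
  -- the mean-value estimate
  set z : EuclideanSpace ℝ (Fin d) := p j.castSucc.succ with hz_def
  have hze : z ∈ e := by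
    rw [he]; exact subset_convexHull ℝ (Set.range face) ⟨j, rfl⟩
  set w : EuclideanSpace ℝ (Fin d) → ℝ := fun x => vp x - vm x with hw_def
  have hvpc : Continuous vp := AffineMap.continuous_linear_iff.1
    vp.linear.continuous_of_finiteDimensional
  have hvmc : Continuous vm := AffineMap.continuous_linear_iff.1
    vm.linear.continuous_of_finiteDimensional
  have hwcont : Continuous w := hvpc.sub hvmc
  have hemeas : MeasurableSet e := hec.isClosed.measurableSet
  haveI hfin : IsFiniteMeasure
      ((Measure.hausdorffMeasure ((d : ℝ) - 1) :
        Measure (EuclideanSpace ℝ (Fin d))).restrict e) := by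
    constructor
    rw [Measure.restrict_apply_univ]
    exact He_ub
  have hwint : Integrable w ((Measure.hausdorffMeasure ((d : ℝ) - 1)).restrict e) := by
    obtain ⟨M, hM⟩ := hec.exists_bound_of_continuousOn hwcont.continuousOn
    apply Integrable.mono' (integrable_const M) hwcont.aestronglyMeasurable
    rw [ae_restrict_iff' hemeas]
    exact ae_of_all _ fun x hx => hM x hx
  have hLh : ∀ x ∈ e, ‖w z - w x‖ ≤ (‖cvp‖ + ‖cvm‖) * h := by
    intro x hx
    have hdist : ‖z - x‖ ≤ h := by
      rw [← dist_eq_norm]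
      exact le_trans (Metric.dist_le_diam_of_mem hTpc.isBounded (heTp hze) (heTp hx)) hdiamp
    have hvp : vp z - vp x = cvp (z - x) := by
      rw [hcvp_def]
      have := vp.linearMap_vsub z x
      simp only [vsub_eq_sub] at this
      rw [LinearMap.coe_toContinuousLinearMap']
      exact this.symm
    have hvm : vm z - vm x = cvm (z - x) := by
      rw [hcvm_def]
      have := vm.linearMap_vsub z x
      simp only [vsub_eq_sub] at this
      rw [LinearMap.coe_toContinuousLinearMap']
      exact this.symm
    have : w z - w x = cvp (z - x) - cvm (z - x) := by
      rw [hw_def]; simp only []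
      rw [← hvp, ← hvm]; ring
    rw [this]
    calc ‖cvp (z - x) - cvm (z - x)‖ ≤ ‖cvp (z - x)‖ + ‖cvm (z - x)‖ := norm_sub_le _ _
      _ ≤ ‖cvp‖ * ‖z - x‖ + ‖cvm‖ * ‖z - x‖ :=
          add_le_add (cvp.le_opNorm _) (cvm.le_opNorm _)
      _ ≤ ‖cvp‖ * h + ‖cvm‖ * h := by
          apply add_le_add <;> exact mul_le_mul_of_nonneg_left hdist (norm_nonneg _)
      _ = (‖cvp‖ + ‖cvm‖) * h := by ring
  have hstep : |w z - Qm| ≤ (‖cvp‖ + ‖cvm‖) * h := by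
    set I : ℝ := ∫ x in e, w x ∂(Measure.hausdorffMeasure ((d : ℝ) - 1)) with hI_def
    have hQm' : Qm = He⁻¹ * I := by rw [hQm]
    have hdiff : He * w z - I = ∫ x in e, (w z - w x)
        ∂(Measure.hausdorffMeasure ((d : ℝ) - 1)) := by
      rw [integral_sub (integrable_const _) hwint, setIntegral_const, smul_eq_mul]
      rfl
    have hbnd : ‖∫ x in e, (w z - w x) ∂(Measure.hausdorffMeasure ((d : ℝ) - 1))‖ ≤
        (‖cvp‖ + ‖cvm‖) * h * He := by
      have := norm_integral_le_of_norm_le_const (μ :=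
        (Measure.hausdorffMeasure ((d : ℝ) - 1)).restrict e)
        (f := fun x => w z - w x) (C := (‖cvp‖ + ‖cvm‖) * h) ?_
      · rwa [Measure.real, Measure.restrict_apply_univ] at this
      · rw [ae_restrict_iff' hemeas]
        exact ae_of_all _ fun x hx => hLh x hx
    have heq : w z - Qm = He⁻¹ * (He * w z - I) := by
      rw [hQm']
      field_simp
    rw [heq, abs_mul, abs_inv, abs_of_pos hHe_pos]
    rw [hdiff]
    calc He⁻¹ * |∫ x in e, (w z - w x) ∂(Measure.hausdorffMeasure ((d : ℝ) - 1))| ≤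
        He⁻¹ * ((‖cvp‖ + ‖cvm‖) * h * He) := by
          apply mul_le_mul_of_nonneg_left _ (by positivity)
          exact hbnd
      _ = (‖cvp‖ + ‖cvm‖) * h := by field_simp
  -- powers bookkeeping
  have hgs : 0 ≤ Real.sqrt gradsq := Real.sqrt_nonneg _
  have hhalf : ∀ (x : ℝ), 0 < x → ∀ m' : ℕ, Real.sqrt (x ^ m') = x ^ ((m':ℝ)/2) := by
    intro x hx m'
    rw [← Real.rpow_natCast x m', Real.sqrt_eq_rpow, ← Real.rpow_mul hx.le]
    congr 1
    ring
  have h2γ : (0:ℝ) < 2 * γ₀ := by linarith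
  have hrpowh : ∀ y : ℝ, (0:ℝ) < h ^ y := fun y => Real.rpow_pos_of_pos hh y
  have bound1 : (‖cvp‖ + ‖cvm‖) * h ≤ C₁ * (h ^ ((1:ℝ) - d / 2) * Real.sqrt gradsq) := by
    have key1 : h / Real.sqrt (r₀ ^ d) = (2*γ₀) ^ ((d:ℝ)/2) * h ^ ((1:ℝ) - (d:ℝ)/2) := by
      rw [hhalf r₀ hr₀ d, hr₀_def, Real.div_rpow hh.le h2γ.le]
      rw [Real.rpow_sub hh, Real.rpow_one]
      rw [div_div_eq_mul_div, mul_comm, mul_div_assoc]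
    have hsq : Real.sqrt (r₀ ^ d * κd) = Real.sqrt (r₀ ^ d) * Real.sqrt κd :=
      Real.sqrt_mul (by positivity) _
    have hA : (0:ℝ) < Real.sqrt (r₀ ^ d) := Real.sqrt_pos.2 (by positivity)
    have hB : (0:ℝ) < Real.sqrt κd := Real.sqrt_pos.2 hκd
    have step1 : (‖cvp‖ + ‖cvm‖) * h ≤
        2 * (Real.sqrt gradsq / Real.sqrt (r₀ ^ d * κd)) * h := by
      apply mul_le_mul_of_nonneg_right _ hh.le
      linarith
    have step2 : 2 * (Real.sqrt gradsq / Real.sqrt (r₀ ^ d * κd)) * h =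
        (2 / Real.sqrt κd) * Real.sqrt gradsq * (h / Real.sqrt (r₀ ^ d)) := by
      rw [hsq]
      ring
    have step3 : (2 / Real.sqrt κd) * Real.sqrt gradsq * (h / Real.sqrt (r₀ ^ d)) =
        C₁ * (h ^ ((1:ℝ) - (d:ℝ)/2) * Real.sqrt gradsq) := by
      rw [key1, hC₁_def]
      field_simp
    calc (‖cvp‖ + ‖cvm‖) * h ≤ 2 * (Real.sqrt gradsq / Real.sqrt (r₀ ^ d * κd)) * h := step1
      _ = C₁ * (h ^ ((1:ℝ) - (d:ℝ)/2) * Real.sqrt gradsq) := by rw [step2, step3]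
  have bound2 : |Qm| ≤ C₂ * (h ^ ((1:ℝ)/2 - (d:ℝ)/2) * Real.sqrt (Qm ^ 2 * He)) := by
    have hcE0 : (0:ℝ) < κe * r₀ ^ (d-1) := by positivity
    have h1 : |Qm| * Real.sqrt (κe * r₀ ^ (d-1)) ≤ Real.sqrt (Qm^2 * He) := by
      rw [← Real.sqrt_sq_eq_abs, ← Real.sqrt_mul (sq_nonneg _)]
      apply Real.sqrt_le_sqrt
      exact mul_le_mul_of_nonneg_left hHe_lb (sq_nonneg _)
    have h2 : |Qm| ≤ Real.sqrt (Qm^2 * He) / Real.sqrt (κe * r₀ ^ (d-1)) := by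
      rw [le_div_iff₀ (Real.sqrt_pos.2 hcE0)]
      exact h1
    have h3 : Real.sqrt (κe * r₀ ^ (d-1)) =
        Real.sqrt κe * (h ^ (((d:ℝ)-1)/2) / (2*γ₀) ^ (((d:ℝ)-1)/2)) := by
      rw [Real.sqrt_mul hκe.le, hhalf r₀ hr₀ (d-1), hr₀_def,
        Real.div_rpow hh.le h2γ.le, Nat.cast_sub hd, Nat.cast_one]
    have h4 : h ^ ((1:ℝ)/2 - (d:ℝ)/2) = (h ^ (((d:ℝ)-1)/2))⁻¹ := by
      rw [show (1:ℝ)/2 - (d:ℝ)/2 = -(((d:ℝ)-1)/2) by ring, Real.rpow_neg hh.le]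
    have hse : (0:ℝ) < Real.sqrt κe := Real.sqrt_pos.2 hκe
    have hg2 : (0:ℝ) < (2*γ₀) ^ (((d:ℝ)-1)/2) := Real.rpow_pos_of_pos h2γ _
    calc |Qm| ≤ Real.sqrt (Qm^2 * He) / Real.sqrt (κe * r₀ ^ (d-1)) := h2
      _ = C₂ * (h ^ ((1:ℝ)/2 - (d:ℝ)/2) * Real.sqrt (Qm ^ 2 * He)) := by
          rw [h3, h4, hC₂_def]
          field_simp
  -- final assembly
  have hfinal : |vp z - vm z| ≤ |Qm| + (‖cvp‖ + ‖cvm‖) * h := by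
    have : vp z - vm z = w z := rfl
    rw [this]
    calc |w z| = |Qm + (w z - Qm)| := by ring_nf
      _ ≤ |Qm| + |w z - Qm| := abs_add_le _ _
      _ ≤ |Qm| + (‖cvp‖ + ‖cvm‖) * h := by linarith [hstep]
  have hX : 0 ≤ h ^ ((1:ℝ) - d / 2) * Real.sqrt gradsq := by positivity
  have hY : 0 ≤ h ^ ((1:ℝ)/2 - (d:ℝ)/2) * Real.sqrt (Qm ^ 2 * He) := by positivity
  calc |vp z - vm z| ≤ |Qm| + (‖cvp‖ + ‖cvm‖) * h := hfinal
    _ ≤ C₂ * (h ^ ((1:ℝ)/2 - (d:ℝ)/2) * Real.sqrt (Qm ^ 2 * He)) +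
        C₁ * (h ^ ((1:ℝ) - d / 2) * Real.sqrt gradsq) := add_le_add bound2 bound1
    _ ≤ (1 + C₁ + C₂) * (h ^ ((1:ℝ) - d / 2) * Real.sqrt gradsq +
        h ^ ((1:ℝ)/2 - (d:ℝ)/2) * Real.sqrt (Qm ^ 2 * He)) := by nlinarith
end
end
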